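/- arXiv:1505.02058 — 3 statements merged into one kernel-verified Lean document; each statement's English description precedes it below -/
import Mathlib

section
/- Let (W,S) be a Coxeter system with geometric representation on (V,B). If α and β are two roots lying in the inversion set N(w) of some element w ∈ W, then B(α,β) > -1. -/
open scoped Classical

noncomputable section

namespace CoxGar

variable {I : Type*} {W : Type*} [Group W] {M : CoxeterMatrix I}
variable {V : Type*} [AddCommGroup V] [Module ℝ V]

/-- The conic (nonnegative) hull of a set of vectors. -/
def posSpan (A : Set V) : Set V :=
  {v | ∃ (s : Finset V) (c : V → ℝ), ↑s ⊆ A ∧ (∀ x ∈ s, 0 ≤ c x) ∧ v = ∑ x ∈ s, c x • x}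

/-- `l` is a reduced word. -/
def IsRed (cs : CoxeterSystem M W) (l : List I) : Prop :=
  cs.length (cs.wordProd l) = l.length

/-- Right weak order: `u` is a prefix of `v`, i.e. some reduced word for `u` is a prefix of
some reduced word for `v`. -/
def leR (cs : CoxeterSystem M W) (u v : W) : Prop :=
  ∃ l₁ l₂ : List I, IsRed cs (l₁ ++ l₂) ∧ cs.wordProd (l₁ ++ l₂) = v ∧ cs.wordProd l₁ = u

/-- `u` is a suffix of `v`: some reduced word for `u` is a suffix of some reduced word for `v`. -/
def IsSuffixOf (cs : CoxeterSystem M W) (u v : W) : Prop :=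
  ∃ l₁ l₂ : List I, IsRed cs (l₁ ++ l₂) ∧ cs.wordProd (l₁ ++ l₂) = v ∧ cs.wordProd l₂ = u

/-- `j` is the join (least upper bound) of `X` in right weak order. -/
def IsJoin (cs : CoxeterSystem M W) (X : Set W) (j : W) : Prop :=
  (∀ x ∈ X, leR cs x j) ∧ ∀ g, (∀ x ∈ X, leR cs x g) → leR cs j g

/-- A Garside shadow in the Coxeter system `(W,S)`: a subset of `W` containing all simple
reflections, closed under existing joins in right weak order and under taking suffixes. -/
structure IsGarsideShadow (cs : CoxeterSystem M W) (A : Set W) : Prop where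
  simple_mem : ∀ i : I, cs.simple i ∈ A
  join_mem : ∀ X ⊆ A, ∀ j : W, IsJoin cs X j → j ∈ A
  suffix_mem : ∀ w ∈ A, ∀ u : W, IsSuffixOf cs u w → u ∈ A

/-- Word length with respect to an arbitrary generating set of a group. -/
def genLen (Sgen : Set W) (w : W) : ℕ :=
  sInf {n | ∃ l : List W, l.length = n ∧ (∀ x ∈ l, x ∈ Sgen) ∧ l.prod = w}

/-- A geometric representation of the Coxeter system `cs` on the quadratic space `(V,B)`:
a faithful representation sending the simple reflections to the `B`-reflections in a
simple system `α` (positively independent unit roots with the prescribed pairings). -/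
structure GeomRep (cs : CoxeterSystem M W) (V : Type*) [AddCommGroup V] [Module ℝ V] where
  B : V →ₗ[ℝ] V →ₗ[ℝ] ℝ
  symm : ∀ u v : V, B u v = B v u
  α : I → V
  norm_one : ∀ i, B (α i) (α i) = 1
  pairing_finite : ∀ i j, M i j ≠ 0 → B (α i) (α j) = - Real.cos (Real.pi / (M i j : ℝ))
  pairing_infinite : ∀ i j, M i j = 0 → B (α i) (α j) ≤ -1
  posIndep : ∀ f : I →₀ ℝ, (∀ i, 0 ≤ f i) → (f.sum fun i c => c • α i) = 0 → f = 0
  ρ : Representation ℝ W V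
  faithful : Function.Injective ρ
  ρ_simple : ∀ (i : I) (v : V), ρ (cs.simple i) v = v - (2 * B (α i) v) • α i
  ρ_isom : ∀ (w : W) (u v : V), B (ρ w u) (ρ w v) = B u v

namespace GeomRep

variable {cs : CoxeterSystem M W} (gr : GeomRep cs V)

/-- The root system `Φ`: the orbit of the simple roots. -/
def roots : Set V := {v | ∃ (w : W) (i : I), v = gr.ρ w (gr.α i)}

/-- The positive roots `Φ⁺`. -/
def posRoots : Set V := gr.roots ∩ posSpan (Set.range gr.α)

/-- The left inversion set `N(w) = Φ⁺ ∩ w(Φ⁻)`. -/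
def invSet (w : W) : Set V := {v | v ∈ gr.posRoots ∧ gr.ρ w⁻¹ v ∈ -gr.posRoots}

/-- The reflection `s_β ∈ W` associated to a root `β` (the element of `W` acting on `V` as the
`B`-reflection along `β`). -/
def rfl' (b : V) : W :=
  Classical.epsilon fun t => ∀ v : V, gr.ρ t v = v - (2 * gr.B b v) • b

/-- Dominance order: `a ⪯ b` iff every inversion set containing `b` contains `a`. -/
def dominates (a b : V) : Prop := ∀ w : W, b ∈ gr.invSet w → a ∈ gr.invSet w

/-- The set of positive roots strictly dominated by `b`. -/
def domSet (b : V) : Set V := {a | a ∈ gr.posRoots ∧ gr.dominates a b ∧ a ≠ b}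

/-- The dominance depth (`∞`-depth) of a root. -/
def dpInf (b : V) : ℕ := (gr.domSet b).ncard

/-- The set `Σ_n` of `n`-small roots. -/
def smallRoots (n : ℕ) : Set V := {b | b ∈ gr.posRoots ∧ gr.dpInf b ≤ n}

/-- `w` is `n`-low: its inversion set is the set of roots in the conic hull of its
`n`-small inversion set. -/
def IsLow (n : ℕ) (w : W) : Prop :=
  gr.invSet w = posSpan (gr.invSet w ∩ gr.smallRoots n) ∩ gr.roots

/-- The set `L_n(W)` of `n`-low elements. -/
def lowSet (n : ℕ) : Set W := {w | gr.IsLow n w}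

/-- The base `N¹(w)` of the inversion set: positive roots `β` with `ℓ(s_β w) = ℓ(w) - 1`. -/
def base (w : W) : Set V :=
  {b | b ∈ gr.posRoots ∧ cs.length (gr.rfl' b * w) + 1 = cs.length w}

/-- The roots of a reflection subgroup `W'`. -/
def rootsOf (W' : Subgroup W) : Set V := {b | b ∈ gr.roots ∧ gr.rfl' b ∈ W'}

/-- The canonical simple system of a reflection subgroup `W'`. -/
def canSimples (W' : Subgroup W) : Set V :=
  {a | a ∈ gr.posRoots ∧ gr.invSet (gr.rfl' a) ∩ gr.rootsOf W' = {a}}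

/-- `{a,b}` is the canonical simple pair of a maximal dihedral reflection subgroup:
both are positive roots and the positive roots in the plane they span are exactly the
roots in their conic hull. -/
def IsMaxDihedralPair (a b : V) : Prop :=
  a ∈ gr.posRoots ∧ b ∈ gr.posRoots ∧ a ≠ b ∧
    (Submodule.span ℝ {a, b} : Set V) ∩ gr.posRoots = posSpan {a, b} ∩ gr.roots

/-- A set of positive roots is bipodal if, whenever it contains a positive non-simple root of a
maximal dihedral reflection subgroup, it contains both canonical simple roots of that subgroup. -/
def Bipodal (A : Set V) : Prop :=
  ∀ a b : V, gr.IsMaxDihedralPair a b →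
    (∃ c ∈ A, c ∈ posSpan {a, b} ∩ gr.roots ∧ c ≠ a ∧ c ≠ b) → a ∈ A ∧ b ∈ A

/-- `f_s(β)`: the root completing `α_s` to the canonical simple pair of the maximal dihedral
reflection subgroup containing `s` and `s_β`. -/
def fRoot (i : I) (b : V) : V :=
  Classical.epsilon fun c => c ∈ gr.posRoots ∧
    (Submodule.span ℝ {gr.α i, b} : Set V) ∩ gr.posRoots = posSpan {gr.α i, c} ∩ gr.roots

/-- The `X`-length of a positive root. -/
def dXpos (X : Set ℝ) (b : V) : ℕ :=
  {a | a ∈ gr.invSet (gr.rfl' b) ∧ gr.B a b ∈ X}.ncard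

/-- The `X`-length function `d_X` on the root system, with `d_X(-β) = -d_X(β)`. -/
def dX (X : Set ℝ) (b : V) : ℤ :=
  if b ∈ gr.posRoots then (gr.dXpos X b : ℤ) else -(gr.dXpos X (-b) : ℤ)

/-- Normalization of a vector to square length one. -/
def nzd (v : V) : V := (Real.sqrt (gr.B v v))⁻¹ • v

/-- A root `a` spans an extreme ray of the cone `C`. -/
def IsExtremeRayRep (C : Set V) (a : V) : Prop :=
  a ∈ C ∧ a ≠ 0 ∧ ∀ u ∈ C, ∀ v ∈ C, a ∈ posSpan {u, v} →
    (∃ c : ℝ, 0 < c ∧ u = c • a) ∨ (∃ c : ℝ, 0 < c ∧ v = c • a)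

end GeomRep

variable {cs : CoxeterSystem M W}


/-! ### Auxiliary development -/

section PosSpanAux

/-- Membership in the conic hull of the range of a family, via finitely supported
nonnegative coefficients. -/
lemma mem_posSpan_range_iff {α : I → V} {v : V} :
    v ∈ posSpan (Set.range α) ↔
      ∃ f : I →₀ ℝ, (∀ i, 0 ≤ f i) ∧ v = Finsupp.linearCombination ℝ α f := by
  constructor
  · rintro ⟨s, c, hsub, hc, rfl⟩
    have hch : ∀ x : {x // x ∈ s}, ∃ i, α i = x.1 := fun x => hsub x.2
    choose g hg using hch
    refine ⟨∑ x ∈ s.attach, Finsupp.single (g x) (c x.1), fun i => ?_, ?_⟩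
    · rw [Finsupp.finset_sum_apply]
      refine Finset.sum_nonneg fun x _ => ?_
      rw [Finsupp.single_apply]
      split
      · exact hc x.1 x.2
      · exact le_rfl
    · rw [map_sum, ← Finset.sum_attach s (fun x => c x • x)]
      refine Finset.sum_congr rfl fun x _ => ?_
      rw [Finsupp.linearCombination_single, hg]
  · rintro ⟨f, hf, rfl⟩
    refine ⟨f.support.image α,
      fun x => ∑ i ∈ f.support.filter (fun i => α i = x), f i, ?_, ?_, ?_⟩
    · intro x hx
      simp only [Finset.coe_image, Set.mem_image, Finset.mem_coe] at hx
      obtain ⟨i, _, rfl⟩ := hx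
      exact Set.mem_range_self i
    · intro x _
      exact Finset.sum_nonneg fun i _ => hf i
    · rw [Finsupp.linearCombination_apply, Finsupp.sum]
      rw [Finset.sum_image' (fun i => f i • α i)]
      intro i₀ hi₀
      rw [Finset.sum_smul]
      refine Finset.sum_congr rfl fun j hj => ?_
      rw [(Finset.mem_filter.1 hj).2]

end PosSpanAux


section BasicAux

namespace GeomRep

variable {cs : CoxeterSystem M W} (gr : GeomRep cs V)

lemma rho_rho (g h : W) (v : V) : gr.ρ g (gr.ρ h v) = gr.ρ (g * h) v := by
  rw [map_mul]; rfl

lemma rho_inv_rho (w : W) (v : V) : gr.ρ w⁻¹ (gr.ρ w v) = v := by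
  rw [gr.rho_rho, inv_mul_cancel, map_one]; rfl

lemma rho_rho_inv (w : W) (v : V) : gr.ρ w (gr.ρ w⁻¹ v) = v := by
  rw [gr.rho_rho, mul_inv_cancel, map_one]; rfl

lemma B_root_self {a : V} (ha : a ∈ gr.roots) : gr.B a a = 1 := by
  obtain ⟨w, i, rfl⟩ := ha
  rw [gr.ρ_isom, gr.norm_one]

lemma root_ne_zero {a : V} (ha : a ∈ gr.roots) : a ≠ 0 := by
  intro h
  have h1 := gr.B_root_self ha
  rw [h] at h1
  simp at h1

lemma simple_mem_roots (i : I) : gr.α i ∈ gr.roots :=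
  ⟨1, i, by rw [map_one]; rfl⟩

lemma rho_mem_roots (w : W) {a : V} (ha : a ∈ gr.roots) : gr.ρ w a ∈ gr.roots := by
  obtain ⟨u, i, rfl⟩ := ha
  exact ⟨w * u, i, gr.rho_rho w u _⟩

lemma mem_P_iff {v : V} :
    v ∈ posSpan (Set.range gr.α) ↔
      ∃ f : I →₀ ℝ, (∀ i, 0 ≤ f i) ∧ v = Finsupp.linearCombination ℝ gr.α f :=
  mem_posSpan_range_iff

lemma simple_mem_P (i : I) : gr.α i ∈ posSpan (Set.range gr.α) := by
  rw [gr.mem_P_iff]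
  exact ⟨Finsupp.single i 1, fun j => by
    rw [Finsupp.single_apply]; split <;> norm_num,
    by rw [Finsupp.linearCombination_single, one_smul]⟩

lemma add_smul_mem_P {p q : ℝ} (hp : 0 ≤ p) (hq : 0 ≤ q) {x y : V}
    (hx : x ∈ posSpan (Set.range gr.α)) (hy : y ∈ posSpan (Set.range gr.α)) :
    p • x + q • y ∈ posSpan (Set.range gr.α) := by
  rw [gr.mem_P_iff] at hx hy ⊢
  obtain ⟨f, hf, rfl⟩ := hx
  obtain ⟨g, hg, rfl⟩ := hy
  refine ⟨p • f + q • g, fun i => ?_, by rw [map_add, map_smul, map_smul]⟩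
  simp only [Finsupp.add_apply, Finsupp.smul_apply, smul_eq_mul]
  have := mul_nonneg hp (hf i)
  have := mul_nonneg hq (hg i)
  linarith

lemma eq_zero_of_mem_P_of_neg_mem_P {v : V} (h1 : v ∈ posSpan (Set.range gr.α))
    (h2 : -v ∈ posSpan (Set.range gr.α)) : v = 0 := by
  rw [gr.mem_P_iff] at h1 h2
  obtain ⟨f, hf, hfv⟩ := h1
  obtain ⟨g, hg, hgv⟩ := h2
  have hsum : Finsupp.linearCombination ℝ gr.α (f + g) = 0 := by
    rw [map_add, ← hfv, ← hgv, add_neg_cancel]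
  have hzero : f + g = 0 := by
    apply gr.posIndep (f + g) (fun i => by
      simp only [Finsupp.add_apply]
      exact add_nonneg (hf i) (hg i))
    rw [← Finsupp.linearCombination_apply, hsum]
  have hf0 : f = 0 := by
    ext i
    have h1 : f i + g i = 0 := by
      have := congrArg (fun h => h i) hzero
      simpa using this
    have := hf i
    have := hg i
    simp only [Finsupp.coe_zero, Pi.zero_apply]
    linarith
  rw [hfv, hf0, map_zero]

lemma pairing_nonpos {i j : I} (hij : i ≠ j) : gr.B (gr.α i) (gr.α j) ≤ 0 := by
  by_cases h : M i j = 0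
  · linarith [gr.pairing_infinite i j h]
  · rw [gr.pairing_finite i j h]
    have h2 : 2 ≤ M i j := by
      have := M.off_diagonal i j hij
      omega
    have hpos : 0 < (M i j : ℝ) := by positivity
    have h1 : Real.pi / (M i j : ℝ) ≤ Real.pi / 2 := by
      apply div_le_div_of_nonneg_left Real.pi_pos.le (by norm_num)
      exact_mod_cast h2
    have h0 : 0 ≤ Real.pi / (M i j : ℝ) := by positivity
    have := Real.cos_nonneg_of_mem_Icc ⟨by linarith [Real.pi_pos], h1⟩
    linarith

lemma rho_simple_self (i : I) : gr.ρ (cs.simple i) (gr.α i) = -(gr.α i) := by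
  rw [gr.ρ_simple, gr.norm_one]
  module

/-- Key lemma: if a positive root is sent to a negative root by a simple
reflection, it is the corresponding simple root. -/
lemma eq_simple_of_refl_neg {i : I} {v : V} (hv : v ∈ gr.roots)
    (hvP : v ∈ posSpan (Set.range gr.α))
    (hneg : -(gr.ρ (cs.simple i) v) ∈ posSpan (Set.range gr.α)) : v = gr.α i := by
  set t := 2 * gr.B (gr.α i) v with ht
  have hrefl : -(gr.ρ (cs.simple i) v) = t • gr.α i - v := by
    rw [gr.ρ_simple]; abel
  rw [gr.mem_P_iff] at hvP hneg
  obtain ⟨f, hf, hfv⟩ := hvP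
  obtain ⟨g, hg, hgv⟩ := hneg
  set h : I →₀ ℝ := f + g with hdefh
  have hLCh : Finsupp.linearCombination ℝ gr.α h = t • gr.α i := by
    rw [hdefh, map_add, ← hfv, ← hgv, hrefl]; abel
  have hhnn : ∀ j, 0 ≤ h j := fun j => by
    simp only [hdefh, Finsupp.add_apply]
    exact add_nonneg (hf j) (hg j)
  set h' : I →₀ ℝ := h.erase i with hdefh'
  have hLCh' : Finsupp.linearCombination ℝ gr.α h' = (t - h i) • gr.α i := by
    have hsplit : Finsupp.single i (h i) + h.erase i = h := Finsupp.single_add_erase i h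
    have := congrArg (Finsupp.linearCombination ℝ gr.α) hsplit
    rw [map_add, Finsupp.linearCombination_single, hLCh] at this
    rw [hdefh', sub_smul, ← this]
    abel
  have hh'nn : ∀ j, 0 ≤ h' j := fun j => by
    rw [hdefh', Finsupp.erase_apply]
    split
    · exact le_rfl
    · exact hhnn j
  -- show t ≤ h i
  have hti : t - h i ≤ 0 := by
    by_contra hcon
    push_neg at hcon
    have hB : gr.B (gr.α i) (Finsupp.linearCombination ℝ gr.α h') ≤ 0 := by
      rw [Finsupp.linearCombination_apply, Finsupp.sum]
      rw [map_sum]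
      apply Finset.sum_nonpos
      intro j hj
      have hji : j ≠ i := by
        intro hji
        subst hji
        apply Finsupp.mem_support_iff.1 hj
        rw [hdefh']
        exact Finsupp.erase_same
      rw [map_smul, smul_eq_mul]
      exact mul_nonpos_of_nonneg_of_nonpos (hh'nn j) (gr.pairing_nonpos (Ne.symm hji))
    rw [hLCh', map_smul, gr.norm_one, smul_eq_mul, mul_one] at hB
    linarith
  -- now positivity forces everything to vanish off i
  have hzero : h' + Finsupp.single i (h i - t) = 0 := by
    apply gr.posIndep _ (fun j => by
      simp only [Finsupp.add_apply]
      refine add_nonneg (hh'nn j) ?_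
      rw [Finsupp.single_apply]
      split
      · linarith
      · exact le_rfl)
    rw [← Finsupp.linearCombination_apply, map_add, hLCh', Finsupp.linearCombination_single,
      ← add_smul]
    have : t - h i + (h i - t) = 0 := by ring
    rw [this, zero_smul]
  have hfj : ∀ j, j ≠ i → f j = 0 := by
    intro j hji
    have h'j : h' j = 0 := by
      have := congrArg (fun x => x j) hzero
      simp only [Finsupp.add_apply, Finsupp.coe_zero, Pi.zero_apply] at this
      have hs : Finsupp.single i (h i - t) j = 0 := Finsupp.single_eq_of_ne' (Ne.symm hji)
      rw [hs, add_zero] at this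
      exact this
    rw [hdefh', Finsupp.erase_ne hji, hdefh, Finsupp.add_apply] at h'j
    have := hf j
    have := hg j
    linarith
  have hveq : v = f i • gr.α i := by
    have : f = Finsupp.single i (f i) := by
      ext j
      rcases eq_or_ne j i with rfl | hji
      · rw [Finsupp.single_eq_same]
      · rw [Finsupp.single_eq_of_ne' (Ne.symm hji), hfj j hji]
    rw [hfv, this, Finsupp.linearCombination_single, Finsupp.single_eq_same]
  have hBvv : gr.B v v = 1 := gr.B_root_self hv
  rw [hveq] at hBvv
  simp only [map_smul, LinearMap.smul_apply, smul_eq_mul, gr.norm_one, mul_one] at hBvv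
  have hfi : f i = 1 := by nlinarith [hf i, hBvv]
  rw [hveq, hfi, one_smul]

end GeomRep

end BasicAux


section ChebAux

/-- Chebyshev-like sequence attached to a pairing value `c`. -/
def cheb (c : ℝ) : ℕ → ℝ
  | 0 => 0
  | 1 => 1
  | n + 2 => -2 * c * cheb c (n + 1) - cheb c n

@[simp] lemma cheb_zero (c : ℝ) : cheb c 0 = 0 := rfl

@[simp] lemma cheb_one (c : ℝ) : cheb c 1 = 1 := rfl

lemma cheb_succ_succ (c : ℝ) (n : ℕ) :
    cheb c (n + 2) = -2 * c * cheb c (n + 1) - cheb c n := rfl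

lemma cheb_nonneg_step {c : ℝ} (hc : c ≤ -1) :
    ∀ n, 0 ≤ cheb c n ∧ cheb c n + 1 ≤ cheb c (n + 1) := by
  intro n
  induction n with
  | zero => norm_num
  | succ k ih =>
    obtain ⟨h0, h1⟩ := ih
    have hk1 : 0 ≤ cheb c (k + 1) := by linarith
    refine ⟨hk1, ?_⟩
    rw [cheb_succ_succ]
    nlinarith [mul_nonneg (by linarith : (0:ℝ) ≤ -2 * c - 2) hk1]

lemma cheb_nonneg {c : ℝ} (hc : c ≤ -1) (n : ℕ) : 0 ≤ cheb c n :=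
  (cheb_nonneg_step hc n).1

lemma cheb_strictMono {c : ℝ} (hc : c ≤ -1) : StrictMono (cheb c) :=
  strictMono_nat_of_lt_succ fun n => by linarith [(cheb_nonneg_step hc n).2]

lemma cheb_eq_sin {θ : ℝ} (hθ : Real.sin θ ≠ 0) :
    ∀ n, cheb (-Real.cos θ) n = Real.sin (n * θ) / Real.sin θ := by
  have key : ∀ n : ℕ, cheb (-Real.cos θ) n = Real.sin (n * θ) / Real.sin θ ∧
      cheb (-Real.cos θ) (n + 1) = Real.sin (((n : ℝ) + 1) * θ) / Real.sin θ := by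
    intro n
    induction n with
    | zero => simp [div_self hθ]
    | succ k ih =>
      obtain ⟨h0, h1⟩ := ih
      refine ⟨by push_cast; exact h1, ?_⟩
      rw [cheb_succ_succ, h0, h1]
      push_cast
      have h2 : ((k : ℝ) + 1 + 1) * θ = ((k : ℝ) + 1) * θ + θ := by ring
      have h3 : (k : ℝ) * θ = ((k : ℝ) + 1) * θ - θ := by ring
      rw [h2, Real.sin_add, h3, Real.sin_sub]
      field_simp
      ring
  exact fun n => (key n).1

end ChebAux

section ReflSeqAux

namespace GeomRep

variable {cs : CoxeterSystem M W} (gr : GeomRep cs V)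

/-- The `B`-reflection along a vector `b`. -/
def refl' (b x : V) : V := x - (2 * gr.B b x) • b

/-- Starting from `a`, reflect alternately along `b`, `a`, `b`, ... -/
def reflSeq (a b : V) : ℕ → V
  | 0 => a
  | k + 1 => gr.refl' (if k % 2 = 0 then b else a) (reflSeq a b k)

lemma rho_conj_refl (w : W) (i : I) (x : V) :
    gr.ρ (w * cs.simple i * w⁻¹) x
      = x - (2 * gr.B (gr.ρ w (gr.α i)) x) • gr.ρ w (gr.α i) := by
  have hB : gr.B (gr.α i) (gr.ρ w⁻¹ x) = gr.B (gr.ρ w (gr.α i)) x := by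
    rw [← gr.ρ_isom w (gr.α i) (gr.ρ w⁻¹ x), gr.rho_rho_inv]
  rw [← gr.rho_rho, ← gr.rho_rho, gr.ρ_simple, map_sub, map_smul, gr.rho_rho_inv, hB]

lemma reflSeq_formula {a b : V} (haa : gr.B a a = 1) (hbb : gr.B b b = 1) :
    ∀ k, gr.reflSeq a b k =
      cheb (gr.B a b) (k + 1) • (if k % 2 = 0 then a else b)
        + cheb (gr.B a b) k • (if k % 2 = 0 then b else a) := by
  have hba : gr.B b a = gr.B a b := gr.symm b a
  intro k
  induction k with
  | zero => simp [reflSeq]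
  | succ k ih =>
    have hstep : gr.reflSeq a b (k + 1)
        = gr.refl' (if k % 2 = 0 then b else a) (gr.reflSeq a b k) := rfl
    rcases Nat.mod_two_eq_zero_or_one k with hk | hk
    · have hk1 : (k + 1) % 2 = 1 := by omega
      rw [hstep, ih, if_pos hk, if_pos hk, if_neg (by omega : ¬(k + 1) % 2 = 0),
        if_neg (by omega : ¬(k + 1) % 2 = 0), refl']
      simp only [map_add, map_smul, smul_eq_mul, hba, hbb]
      rw [cheb_succ_succ]
      module
    · have hk1 : (k + 1) % 2 = 0 := by omega
      rw [hstep, ih, if_neg (by omega : ¬k % 2 = 0), if_neg (by omega : ¬k % 2 = 0),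
        if_pos hk1, if_pos hk1, refl']
      simp only [map_add, map_smul, smul_eq_mul, haa, hba]
      rw [cheb_succ_succ]
      module

lemma rho_alt_eq_reflSeq (i j : I) :
    ∀ m, gr.ρ (cs.wordProd (CoxeterSystem.alternatingWord i j m)) (gr.α i)
      = gr.reflSeq (gr.α i) (gr.α j) m := by
  intro m
  induction m with
  | zero =>
    simp only [CoxeterSystem.alternatingWord]
    rw [cs.wordProd_nil, map_one]
    rfl
  | succ m ih =>
    have hstep : gr.reflSeq (gr.α i) (gr.α j) (m + 1)
        = gr.refl' (if m % 2 = 0 then gr.α j else gr.α i) (gr.reflSeq (gr.α i) (gr.α j) m) := rfl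
    rw [CoxeterSystem.alternatingWord_succ', cs.wordProd_cons, ← gr.rho_rho, ih, hstep]
    rcases Nat.even_or_odd m with he | ho
    · rw [if_pos he, if_pos (Nat.even_iff.1 he), gr.ρ_simple, refl']
    · rw [if_neg (Nat.not_even_iff_odd.2 ho), if_neg (by
        rw [Nat.odd_iff] at ho; omega), gr.ρ_simple, refl']

end GeomRep

lemma mem_alternatingWord {i j : I} {m : ℕ} :
    ∀ x ∈ CoxeterSystem.alternatingWord i j m, x = i ∨ x = j := by
  induction m with
  | zero => simp [CoxeterSystem.alternatingWord]
  | succ m ih =>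
    intro x hx
    rw [CoxeterSystem.alternatingWord_succ'] at hx
    rcases List.mem_cons.1 hx with h | h
    · subst h
      split <;> simp
    · exact ih x h

lemma alt_decomp (i j : I) (k d : ℕ) : ∃ ω₁ : List I, (∀ x ∈ ω₁, x = i ∨ x = j) ∧
    CoxeterSystem.alternatingWord i j (k + d) = ω₁ ++ CoxeterSystem.alternatingWord i j k := by
  induction d with
  | zero => exact ⟨[], by simp, by simp⟩
  | succ d ih =>
    obtain ⟨ω₁, hω₁, heq⟩ := ih
    refine ⟨(if Even (k + d) then j else i) :: ω₁, ?_, ?_⟩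
    · intro x hx
      rcases List.mem_cons.1 hx with h | h
      · subst h
        split <;> simp
      · exact hω₁ x h
    · show CoxeterSystem.alternatingWord i j ((k + d) + 1) = _
      rw [CoxeterSystem.alternatingWord_succ', heq]
      rfl

end ReflSeqAux

section DihedralAux

variable {cs : CoxeterSystem M W}

lemma simple_mul_alt (p q x : I) (hpq : p ≠ q) (hx : x = p ∨ x = q) (m : ℕ) :
    ∃ m' ≤ m + 1,
      cs.simple x * cs.wordProd (CoxeterSystem.alternatingWord p q m)
        = cs.wordProd (CoxeterSystem.alternatingWord p q m') ∨
      cs.simple x * cs.wordProd (CoxeterSystem.alternatingWord p q m)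
        = cs.wordProd (CoxeterSystem.alternatingWord q p m') := by
  by_cases he : x = (if Even m then q else p)
  · refine ⟨m + 1, le_rfl, Or.inl ?_⟩
    rw [CoxeterSystem.alternatingWord_succ', cs.wordProd_cons, he]
  · rcases Nat.eq_zero_or_pos m with rfl | hmpos
    · have hxp : x = p := by
        rw [if_pos (by decide : Even 0)] at he
        tauto
      refine ⟨1, by omega, Or.inr ?_⟩
      have h1 : CoxeterSystem.alternatingWord q p 1 = [p] := rfl
      have h0 : CoxeterSystem.alternatingWord p q 0 = [] := rfl
      rw [hxp, h1, h0, cs.wordProd_nil, mul_one,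
        show ([p] : List I) = List.concat [] p from rfl, cs.wordProd_concat,
        cs.wordProd_nil, one_mul]
    · obtain ⟨n, rfl⟩ : ∃ n, m = n + 1 := ⟨m - 1, by omega⟩
      have hh : x = (if Even n then q else p) := by
        by_cases hn : Even n
        · have h1 : ¬Even (n + 1) := by rw [Nat.even_add_one]; exact fun h => h hn
          rw [if_neg h1] at he
          rw [if_pos hn]
          tauto
        · have h1 : Even (n + 1) := by rw [Nat.even_add_one]; exact hn
          rw [if_pos h1] at he
          rw [if_neg hn]
          tauto
      refine ⟨n, by omega, Or.inl ?_⟩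
      rw [CoxeterSystem.alternatingWord_succ', cs.wordProd_cons, ← mul_assoc, ← hh,
        cs.simple_mul_simple_self, one_mul]

lemma exists_alt_form (i j : I) (hij : i ≠ j) (ω : List I)
    (hmem : ∀ x ∈ ω, x = i ∨ x = j) :
    ∃ m ≤ ω.length,
      cs.wordProd ω = cs.wordProd (CoxeterSystem.alternatingWord i j m) ∨
      cs.wordProd ω = cs.wordProd (CoxeterSystem.alternatingWord j i m) := by
  induction ω with
  | nil => exact ⟨0, le_rfl, Or.inl rfl⟩
  | cons x ω' ih =>
    obtain ⟨m, hm, hcase⟩ := ih (fun y hy => hmem y (List.mem_cons_of_mem _ hy))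
    have hx : x = i ∨ x = j := hmem x List.mem_cons_self
    rcases hcase with h | h
    · obtain ⟨m', hm', hc⟩ := simple_mul_alt (cs := cs) i j x hij hx m
      refine ⟨m', by simp only [List.length_cons]; omega, ?_⟩
      rw [cs.wordProd_cons, h]
      exact hc
    · obtain ⟨m', hm', hc⟩ := simple_mul_alt (cs := cs) j i x hij.symm hx.symm m
      refine ⟨m', by simp only [List.length_cons]; omega, ?_⟩
      rw [cs.wordProd_cons, h]
      exact hc.symm

namespace GeomRep

variable (gr : GeomRep cs V)

/-- The rank-2 lemma: if no shorter-or-equal `{i,j}`-word represents `π ω * sᵢ`, then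
`π ω` sends `αᵢ` into the nonnegative cone spanned by `αᵢ, αⱼ`. -/
lemma dihedral_pos (i j : I) (hij : i ≠ j) (ω : List I)
    (hmem : ∀ x ∈ ω, x = i ∨ x = j)
    (H : ∀ ω₂ : List I, (∀ x ∈ ω₂, x = i ∨ x = j) →
      cs.wordProd ω₂ = cs.wordProd ω * cs.simple i → ω.length < ω₂.length) :
    ∃ p q : ℝ, 0 ≤ p ∧ 0 ≤ q ∧
      gr.ρ (cs.wordProd ω) (gr.α i) = p • gr.α i + q • gr.α j := by
  obtain ⟨m, hm, hcase⟩ := exists_alt_form (cs := cs) i j hij ω hmem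
  rcases hcase with hw | hw
  · -- pattern (i, j)
    set c := gr.B (gr.α i) (gr.α j) with hc
    have hnn : 0 ≤ cheb c m ∧ 0 ≤ cheb c (m + 1) := by
      by_cases hM : M i j = 0
      · have hcle : c ≤ -1 := gr.pairing_infinite i j hM
        exact ⟨cheb_nonneg hcle m, cheb_nonneg hcle (m + 1)⟩
      · -- finite order case: first, m < M i j
        have hmlt : m < M i j := by
          by_contra hcon
          push_neg at hcon
          obtain ⟨ω₁, hω₁, heq⟩ := alt_decomp i j (M i j) (m - M i j)
          rw [show M i j + (m - M i j) = m by omega] at heq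
          have hlen : ω₁.length + M i j = m := by
            have := congrArg List.length heq
            rw [List.length_append, CoxeterSystem.length_alternatingWord,
              CoxeterSystem.length_alternatingWord] at this
            omega
          have hbraid : cs.wordProd (CoxeterSystem.alternatingWord i j (M i j))
              = cs.wordProd (CoxeterSystem.alternatingWord j i (M i j)) := by
            have h2 := cs.prod_alternatingWord_eq_prod_alternatingWord_sub i j (M i j)
              (by omega)
            rw [show M i j * 2 - M i j = M i j by omega] at h2
            exact h2
          have hM1 : 1 ≤ M i j := by omega
          have hconcat : CoxeterSystem.alternatingWord j i (M i j)
              = (CoxeterSystem.alternatingWord i j (M i j - 1)).concat i := by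
            rw [show M i j = (M i j - 1) + 1 by omega]
            rw [CoxeterSystem.alternatingWord_succ]
            rw [show (M i j - 1) + 1 - 1 = M i j - 1 by omega]
          have hprod : cs.wordProd (ω₁ ++ CoxeterSystem.alternatingWord i j (M i j - 1))
              = cs.wordProd ω * cs.simple i := by
            rw [cs.wordProd_append, hw, heq, cs.wordProd_append, mul_assoc, hbraid, hconcat,
              cs.wordProd_concat, mul_assoc, cs.simple_mul_simple_self, mul_one]
          have hH := H (ω₁ ++ CoxeterSystem.alternatingWord i j (M i j - 1))
            (fun x hx => by
              rcases List.mem_append.1 hx with h | h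
              · exact hω₁ x h
              · exact mem_alternatingWord x h) hprod
          rw [List.length_append, CoxeterSystem.length_alternatingWord] at hH
          omega
        -- now use the sine formula
        set θ := Real.pi / (M i j : ℝ) with hθdef
        have hM2 : 2 ≤ M i j := by
          have := M.off_diagonal i j hij
          omega
        have hMpos : (0 : ℝ) < (M i j : ℝ) := by positivity
        have hθpos : 0 < θ := by positivity
        have h2M : (2 : ℝ) ≤ (M i j : ℝ) := by exact_mod_cast hM2
        have hθlt : θ < Real.pi := by
          rw [hθdef, div_lt_iff₀ hMpos]
          nlinarith [Real.pi_pos, mul_le_mul_of_nonneg_left h2M Real.pi_pos.le]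
        have hsin : Real.sin θ ≠ 0 :=
          ne_of_gt (Real.sin_pos_of_pos_of_lt_pi hθpos hθlt)
        have hcval : c = -Real.cos θ := gr.pairing_finite i j hM
        have hbound : ∀ k : ℕ, k ≤ M i j → 0 ≤ cheb c k := by
          intro k hk
          rw [hcval, cheb_eq_sin hsin]
          apply div_nonneg _ (le_of_lt (Real.sin_pos_of_pos_of_lt_pi hθpos hθlt))
          apply Real.sin_nonneg_of_nonneg_of_le_pi
          · positivity
          · calc (k : ℝ) * θ ≤ (M i j : ℝ) * θ := by
                  apply mul_le_mul_of_nonneg_right _ hθpos.le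
                  exact_mod_cast hk
              _ = Real.pi := by rw [hθdef]; field_simp
        exact ⟨hbound m (by omega), hbound (m + 1) (by omega)⟩
    have hform := gr.reflSeq_formula (gr.norm_one i) (gr.norm_one j) m
    rw [hw, gr.rho_alt_eq_reflSeq i j m, hform]
    rcases Nat.mod_two_eq_zero_or_one m with hpar | hpar
    · exact ⟨cheb c (m + 1), cheb c m, hnn.2, hnn.1, by rw [if_pos hpar, if_pos hpar]⟩
    · refine ⟨cheb c m, cheb c (m + 1), hnn.1, hnn.2, ?_⟩
      rw [if_neg (by omega : ¬m % 2 = 0), if_neg (by omega : ¬m % 2 = 0)]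
      abel
  · -- pattern (j, i): contradiction with H unless m = 0
    rcases Nat.eq_zero_or_pos m with rfl | hmpos
    · refine ⟨1, 0, by norm_num, le_rfl, ?_⟩
      rw [hw, show CoxeterSystem.alternatingWord j i 0 = [] from rfl, cs.wordProd_nil,
        map_one]
      simp
    · exfalso
      have hconcat : CoxeterSystem.alternatingWord j i m
          = (CoxeterSystem.alternatingWord i j (m - 1)).concat i := by
        rw [show m = (m - 1) + 1 by omega, CoxeterSystem.alternatingWord_succ]
        rw [show (m - 1) + 1 - 1 = m - 1 by omega]
      have hprod : cs.wordProd (CoxeterSystem.alternatingWord i j (m - 1))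
          = cs.wordProd ω * cs.simple i := by
        rw [hw, hconcat, cs.wordProd_concat, mul_assoc, cs.simple_mul_simple_self, mul_one]
      have hH := H (CoxeterSystem.alternatingWord i j (m - 1))
        (fun x hx => mem_alternatingWord x hx) hprod
      rw [CoxeterSystem.length_alternatingWord] at hH
      omega

end GeomRep

end DihedralAux

section MainAux

namespace GeomRep

variable (gr : GeomRep cs V)

/-- The fundamental positivity theorem: if `ℓ(w sᵢ) > ℓ(w)` then `w αᵢ` lies in the
nonnegative cone spanned by the simple roots. -/
lemma pos_of_lt_length_mul_simple :
    ∀ n (w : W), cs.length w ≤ n → ∀ i : I, cs.length w < cs.length (w * cs.simple i) →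
      gr.ρ w (gr.α i) ∈ posSpan (Set.range gr.α) := by
  intro n
  induction n with
  | zero =>
    intro w hw i _
    have hw1 : w = 1 := cs.length_eq_zero_iff.1 (Nat.le_zero.1 hw)
    subst hw1
    rw [map_one]
    exact gr.simple_mem_P i
  | succ n ih =>
    intro w hw i hlen
    by_cases hwn : cs.length w ≤ n
    · exact ih w hwn i hlen
    have hlw : cs.length w = n + 1 := by omega
    have hwne : w ≠ 1 := by
      intro h
      rw [h, cs.length_one] at hlw
      omega
    obtain ⟨j, hj⟩ := cs.exists_rightDescent_of_ne_one hwne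
    have hj' : cs.length (w * cs.simple j) < cs.length w := hj
    have hij : j ≠ i := by
      intro h
      subst h
      omega
    have hij' : i ≠ j := fun h => hij h.symm
    -- minimal coset representative, Humphreys style
    set P' : ℕ → Prop := fun k => ∃ v : W, cs.length v = k ∧ ∃ ω : List I,
      (∀ x ∈ ω, x = i ∨ x = j) ∧ v * cs.wordProd ω = w ∧
        cs.length v + ω.length = cs.length w with hP'
    have hlwsj : cs.length (w * cs.simple j) + 1 = cs.length w := by
      rcases cs.length_mul_simple w j with h | h <;> omega
    have hP'ex : P' (cs.length (w * cs.simple j)) := by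
      refine ⟨w * cs.simple j, rfl, [j], by simp, ?_, ?_⟩
      · rw [cs.wordProd_singleton, mul_assoc, cs.simple_mul_simple_self, mul_one]
      · simp only [List.length_singleton]
        omega
    have hex : ∃ k, P' k := ⟨_, hP'ex⟩
    obtain ⟨v, hvlen, ω, hmem, hprod, hsum⟩ := Nat.find_spec hex
    -- v has no right descent at i or j
    have hnd : ∀ x : I, (x = i ∨ x = j) → cs.length v < cs.length (v * cs.simple x) := by
      intro x hx
      by_contra hcon
      push_neg at hcon
      have hne := cs.length_mul_simple_ne v x
      have hlt : cs.length (v * cs.simple x) < cs.length v := by omega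
      have hvx : cs.length (v * cs.simple x) = cs.length v - 1 := by
        rcases cs.length_mul_simple v x with h | h <;> omega
      have hP'new : P' (cs.length (v * cs.simple x)) := by
        refine ⟨v * cs.simple x, rfl, x :: ω, ?_, ?_, ?_⟩
        · intro y hy
          rcases List.mem_cons.1 hy with h | h
          · subst h; exact hx
          · exact hmem y h
        · rw [cs.wordProd_cons, ← mul_assoc, mul_assoc v, cs.simple_mul_simple_self,
            mul_one, hprod]
        · simp only [List.length_cons]
          omega
      have := Nat.find_min hex (by omega : cs.length (v * cs.simple x) < Nat.find hex) hP'new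
      exact this
    have hk₀ : Nat.find hex ≤ cs.length (w * cs.simple j) := Nat.find_min' hex hP'ex
    have hvle : cs.length v ≤ n := by omega
    have hvi := ih v hvle i (hnd i (Or.inl rfl))
    have hvj := ih v hvle j (hnd j (Or.inr rfl))
    have H : ∀ ω₂ : List I, (∀ x ∈ ω₂, x = i ∨ x = j) →
        cs.wordProd ω₂ = cs.wordProd ω * cs.simple i → ω.length < ω₂.length := by
      intro ω₂ hmem₂ hprod₂
      by_contra hcon
      push_neg at hcon
      have h1 : w * cs.simple i = v * cs.wordProd ω₂ := by
        rw [hprod₂, ← mul_assoc, hprod]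
      have h2 : cs.length (v * cs.wordProd ω₂) ≤ cs.length v + ω₂.length := by
        calc cs.length (v * cs.wordProd ω₂) ≤ cs.length v + cs.length (cs.wordProd ω₂) :=
              cs.length_mul_le v _
          _ ≤ cs.length v + ω₂.length := by
              have := cs.length_wordProd_le ω₂
              omega
      rw [← h1] at h2
      omega
    obtain ⟨p, q, hp, hq, hform⟩ := gr.dihedral_pos i j hij' ω hmem H
    rw [← hprod, ← gr.rho_rho, hform, map_add, map_smul, map_smul]
    exact gr.add_smul_mem_P hp hq hvi hvj

lemma root_pos_or_neg {v : V} (hv : v ∈ gr.roots) :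
    v ∈ posSpan (Set.range gr.α) ∨ -v ∈ posSpan (Set.range gr.α) := by
  obtain ⟨w, i, rfl⟩ := hv
  rcases Nat.lt_or_ge (cs.length w) (cs.length (w * cs.simple i)) with h | h
  · exact Or.inl (gr.pos_of_lt_length_mul_simple (cs.length w) w le_rfl i h)
  · right
    have hne := cs.length_mul_simple_ne w i
    have h2 : cs.length (w * cs.simple i) < cs.length (w * cs.simple i * cs.simple i) := by
      rw [mul_assoc, cs.simple_mul_simple_self, mul_one]
      omega
    have hpos := gr.pos_of_lt_length_mul_simple _ (w * cs.simple i) le_rfl i h2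
    have heq : gr.ρ (w * cs.simple i) (gr.α i) = -(gr.ρ w (gr.α i)) := by
      rw [← gr.rho_rho, gr.rho_simple_self, map_neg]
    rwa [heq] at hpos

lemma neg_mem_roots {v : V} (hv : v ∈ gr.roots) : -v ∈ gr.roots := by
  obtain ⟨g, l, rfl⟩ := hv
  refine ⟨g * cs.simple l, l, ?_⟩
  rw [← gr.rho_rho, gr.rho_simple_self, map_neg]

lemma simple_reflect_mem_posRoots {i : I} {v : V} (hv : v ∈ gr.posRoots)
    (hne : v ≠ gr.α i) : gr.ρ (cs.simple i) v ∈ gr.posRoots := by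
  obtain ⟨hvroot, hvP⟩ := hv
  have hroot : gr.ρ (cs.simple i) v ∈ gr.roots := gr.rho_mem_roots _ hvroot
  rcases gr.root_pos_or_neg hroot with h | h
  · exact ⟨hroot, h⟩
  · exact absurd (gr.eq_simple_of_refl_neg hvroot hvP h) hne

lemma invSet_finite (w : W) : (gr.invSet w).Finite := by
  suffices h : ∀ n (w : W), cs.length w ≤ n → (gr.invSet w).Finite from
    h (cs.length w) w le_rfl
  intro n
  induction n with
  | zero =>
    intro w hw
    have hw1 : w = 1 := cs.length_eq_zero_iff.1 (Nat.le_zero.1 hw)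
    subst hw1
    convert Set.finite_empty
    ext v
    simp only [Set.mem_empty_iff_false, iff_false]
    rintro ⟨⟨hvr, hvP⟩, hneg⟩
    rw [Set.mem_neg] at hneg
    obtain ⟨hnr, hnP⟩ := hneg
    have hval : gr.ρ ((1:W))⁻¹ v = v := by
      rw [inv_one, map_one]
      rfl
    rw [hval] at hnP
    exact gr.root_ne_zero hvr (gr.eq_zero_of_mem_P_of_neg_mem_P hvP hnP)
  | succ n ih =>
    intro w hw
    by_cases hwn : cs.length w ≤ n
    · exact ih w hwn
    have hlw : cs.length w = n + 1 := by omega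
    have hwne : w ≠ 1 := by
      intro h
      rw [h, cs.length_one] at hlw
      omega
    obtain ⟨i, hi⟩ := cs.exists_leftDescent_of_ne_one hwne
    have hi' : cs.length (cs.simple i * w) < cs.length w := hi
    have hulen : cs.length (cs.simple i * w) ≤ n := by omega
    have hfin := ih (cs.simple i * w) hulen
    have hsub : gr.invSet w ⊆
        insert (gr.α i) (gr.ρ (cs.simple i) '' gr.invSet (cs.simple i * w)) := by
      intro v hv
      obtain ⟨hvpos, hvneg⟩ := hv
      by_cases hvi : v = gr.α i
      · exact Set.mem_insert_iff.2 (Or.inl hvi)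
      · refine Set.mem_insert_iff.2 (Or.inr ?_)
        refine ⟨gr.ρ (cs.simple i) v, ⟨gr.simple_reflect_mem_posRoots hvpos hvi, ?_⟩, ?_⟩
        · rw [gr.rho_rho]
          have heq : (cs.simple i * w)⁻¹ * cs.simple i = w⁻¹ := by
            rw [mul_inv_rev, cs.inv_simple, mul_assoc, cs.simple_mul_simple_self, mul_one]
          rw [heq]
          exact hvneg
        · rw [gr.rho_rho, cs.simple_mul_simple_self, map_one]
          rfl
    exact Set.Finite.subset (Set.Finite.insert _ (hfin.image _)) hsub

end GeomRep

end MainAux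

/-- If `α, β ∈ N(w)` then `B(α,β) > -1`. -/
theorem neg_one_lt_pairing_of_mem_invSet (gr : GeomRep cs V) (w : W) {a b : V}
    (ha : a ∈ gr.invSet w) (hb : b ∈ gr.invSet w) :
    -1 < gr.B a b := by
  obtain ⟨⟨haroot, haP⟩, haneg⟩ := ha
  obtain ⟨⟨hbroot, hbP⟩, hbneg⟩ := hb
  rw [Set.mem_neg] at haneg hbneg
  obtain ⟨hanr, hanP⟩ := haneg
  obtain ⟨hbnr, hbnP⟩ := hbneg
  set c := gr.B a b with hc
  by_contra hcon
  push_neg at hcon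
  -- `a ≠ b` since `B a a = 1`
  have hab : a ≠ b := by
    intro h
    have h1 : c = 1 := by
      rw [hc, h]
      exact gr.B_root_self hbroot
    linarith
  -- `a` and `b` are linearly independent
  have hindep : ∀ s t : ℝ, s • a + t • b = 0 → s = 0 ∧ t = 0 := by
    intro s t hst
    have h1 : s + t * c = 0 := by
      have h := congrArg (gr.B a) hst
      rw [map_add, map_smul, map_smul, map_zero] at h
      simpa [gr.B_root_self haroot, smul_eq_mul, ← hc] using h
    have h2 : s * c + t = 0 := by
      have h := congrArg (gr.B b) hst
      rw [map_add, map_smul, map_smul, map_zero] at h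
      have hba : gr.B b a = c := by
        rw [hc]
        exact gr.symm b a
      simpa [gr.B_root_self hbroot, smul_eq_mul, hba] using h
    by_cases ht : t = 0
    · subst ht
      refine ⟨by linarith, rfl⟩
    · exfalso
      have hc2 : c * c = 1 := by
        have h3 : t * (1 - c * c) = 0 := by nlinarith [h1, h2]
        rcases mul_eq_zero.1 h3 with h | h
        · exact absurd h ht
        · nlinarith [h]
      have hcm1 : c = -1 := by nlinarith [hcon, hc2]
      have hs : s = t := by
        rw [hcm1] at h1
        linarith
      rw [hs] at hst
      have hab0 : a + b = 0 := by
        have h4 : t • (a + b) = 0 := by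
          rw [smul_add]
          exact hst
        exact (smul_eq_zero.1 h4).resolve_left ht
      have hbneg' : b = -a := eq_neg_of_add_eq_zero_right hab0
      have ha0 : a = 0 :=
        gr.eq_zero_of_mem_P_of_neg_mem_P haP (hbneg' ▸ hbP)
      exact gr.root_ne_zero haroot ha0
  -- the reflections along `a` and `b` come from `W`
  obtain ⟨wa, ia, hwa⟩ := haroot
  obtain ⟨wb, ib, hwb⟩ := hbroot
  have haroot' : a ∈ gr.roots := ⟨wa, ia, hwa⟩
  have hbroot' : b ∈ gr.roots := ⟨wb, ib, hwb⟩
  have hra : ∀ x, gr.refl' a x = gr.ρ (wa * cs.simple ia * wa⁻¹) x := by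
    intro x
    rw [GeomRep.refl', gr.rho_conj_refl, ← hwa]
  have hrb : ∀ x, gr.refl' b x = gr.ρ (wb * cs.simple ib * wb⁻¹) x := by
    intro x
    rw [GeomRep.refl', gr.rho_conj_refl, ← hwb]
  -- the infinite dihedral root sequence lies in `N(w)`
  have hseq_root : ∀ k, gr.reflSeq a b k ∈ gr.roots := by
    intro k
    induction k with
    | zero => exact haroot'
    | succ k ihk =>
      have hstep : gr.reflSeq a b (k + 1)
          = gr.refl' (if k % 2 = 0 then b else a) (gr.reflSeq a b k) := rfl
      rw [hstep]
      rcases Nat.mod_two_eq_zero_or_one k with hk | hk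
      · rw [if_pos hk, hrb]
        exact gr.rho_mem_roots _ ihk
      · rw [if_neg (by omega : ¬k % 2 = 0), hra]
        exact gr.rho_mem_roots _ ihk
  have hform := gr.reflSeq_formula (gr.B_root_self haroot') (gr.B_root_self hbroot')
  have hmemw : ∀ k, gr.reflSeq a b k ∈ gr.invSet w := by
    intro k
    refine ⟨⟨hseq_root k, ?_⟩, ?_⟩
    · rw [hform k]
      rcases Nat.mod_two_eq_zero_or_one k with hk | hk
      · rw [if_pos hk, if_pos hk]
        exact gr.add_smul_mem_P (cheb_nonneg hcon _) (cheb_nonneg hcon _) haP hbP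
      · rw [if_neg (by omega : ¬k % 2 = 0), if_neg (by omega : ¬k % 2 = 0)]
        exact gr.add_smul_mem_P (cheb_nonneg hcon _) (cheb_nonneg hcon _) hbP haP
    · rw [Set.mem_neg]
      refine ⟨gr.neg_mem_roots (gr.rho_mem_roots w⁻¹ (hseq_root k)), ?_⟩
      rw [hform k, map_add, map_smul, map_smul, neg_add, ← smul_neg, ← smul_neg]
      rcases Nat.mod_two_eq_zero_or_one k with hk | hk
      · rw [if_pos hk, if_pos hk]
        exact gr.add_smul_mem_P (cheb_nonneg hcon _) (cheb_nonneg hcon _) hanP hbnP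
      · rw [if_neg (by omega : ¬k % 2 = 0), if_neg (by omega : ¬k % 2 = 0)]
        exact gr.add_smul_mem_P (cheb_nonneg hcon _) (cheb_nonneg hcon _) hbnP hanP
  -- the sequence is injective
  have hmono := cheb_strictMono hcon
  have key : ∀ p1 q1 p2 q2 : ℝ, p1 • a + q1 • b = p2 • a + q2 • b → p1 = p2 ∧ q1 = q2 := by
    intro p1 q1 p2 q2 h
    have h0 : (p1 - p2) • a + (q1 - q2) • b = 0 := by
      have hx : (p1 - p2) • a + (q1 - q2) • b
          = (p1 • a + q1 • b) - (p2 • a + q2 • b) := by module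
      rw [hx, h, sub_self]
    obtain ⟨h1, h2⟩ := hindep _ _ h0
    constructor <;> linarith
  have hinj : Function.Injective fun k => gr.reflSeq a b k := by
    intro k l hkl
    simp only at hkl
    rw [hform k, hform l] at hkl
    rcases Nat.mod_two_eq_zero_or_one k with hk | hk <;>
      rcases Nat.mod_two_eq_zero_or_one l with hl | hl
    · rw [if_pos hk, if_pos hk, if_pos hl, if_pos hl] at hkl
      obtain ⟨e1, _⟩ := key _ _ _ _ hkl
      have := hmono.injective e1
      omega
    · rw [if_pos hk, if_pos hk, if_neg (by omega : ¬l % 2 = 0),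
        if_neg (by omega : ¬l % 2 = 0),
        add_comm (cheb c (l + 1) • b) (cheb c l • a)] at hkl
      obtain ⟨e1, e2⟩ := key _ _ _ _ hkl
      have h1 := hmono.injective e1
      have h2 := hmono.injective e2
      omega
    · rw [if_neg (by omega : ¬k % 2 = 0), if_neg (by omega : ¬k % 2 = 0), if_pos hl,
        if_pos hl, add_comm (cheb c (k + 1) • b) (cheb c k • a)] at hkl
      obtain ⟨e1, e2⟩ := key _ _ _ _ hkl
      have h1 := hmono.injective e1
      have h2 := hmono.injective e2
      omega
    · rw [if_neg (by omega : ¬k % 2 = 0), if_neg (by omega : ¬k % 2 = 0),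
        if_neg (by omega : ¬l % 2 = 0), if_neg (by omega : ¬l % 2 = 0),
        add_comm (cheb c (k + 1) • b) (cheb c k • a),
        add_comm (cheb c (l + 1) • b) (cheb c l • a)] at hkl
      obtain ⟨e1, _⟩ := key _ _ _ _ hkl
      have := hmono.injective e1
      omega
  -- contradiction with finiteness of the inversion set
  have hrange : Set.range (fun k => gr.reflSeq a b k) ⊆ gr.invSet w := by
    rintro x ⟨k, rfl⟩
    exact hmemw k
  exact Set.infinite_range_of_injective hinj
    (Set.Finite.subset (gr.invSet_finite w) hrange)

end CoxGar
end
end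

section
/- In a Coxeter system (W,S), let s ∈ S, x ∈ W and γ ∈ Φ⁺ such that sx ⋖ x and s_γ x ⋖ x in Bruhat order (both coverings). Then either γ = α_s or s·s_γ x ⋖ s_γ x. -/
open scoped Classical

noncomputable section

namespace CoxGar

variable {I : Type*} {W : Type*} [Group W] {M : CoxeterMatrix I}
variable {V : Type*} [AddCommGroup V] [Module ℝ V]

variable {cs : CoxeterSystem M W}


section SEAux


open scoped Classical

variable {I : Type*} {W : Type*} [Group W] {M : CoxeterMatrix I}
variable (cs : CoxeterSystem M W)

local prefix:100 "s" => cs.simple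
local prefix:100 "π" => cs.wordProd
local prefix:100 "ℓ" => cs.length

noncomputable local instance : DecidableEq W := Classical.decEq W

/-- Parity of the number of occurrences of `t` in the right inversion sequence. -/
noncomputable def nP (ω : List I) (t : W) : ZMod 2 := ((cs.rightInvSeq ω).count t : ZMod 2)

@[simp] lemma nP_nil (t : W) : nP cs [] t = 0 := by simp [nP]

lemma nP_cons (i : I) (ω : List I) (t : W) :
    nP cs (i :: ω) t = nP cs ω t + (if t = (π ω)⁻¹ * s i * π ω then 1 else 0) := by
  simp only [nP, CoxeterSystem.rightInvSeq, List.count_cons, beq_iff_eq]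
  push_cast
  congr 1
  exact if_congr eq_comm rfl rfl

lemma nP_append (ω₁ ω₂ : List I) (t : W) :
    nP cs (ω₁ ++ ω₂) t = nP cs ω₁ ((π ω₂) * t * (π ω₂)⁻¹) + nP cs ω₂ t := by
  induction ω₁ with
  | nil => simp
  | cons a ω₁ ih =>
    rw [List.cons_append, nP_cons, nP_cons, ih, cs.wordProd_append]
    rw [add_assoc, add_assoc, add_comm (nP cs ω₂ t)]
    congr 2
    apply if_congr _ rfl rfl
    constructor
    · intro h
      rw [h]; group
    · intro h
      have ht : t = (π ω₂)⁻¹ * ((π ω₁)⁻¹ * s a * π ω₁) * π ω₂ := by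
        rw [← h]; group
      rw [ht]; group


/-- The Björner–Brenti permutation attached to a simple reflection, acting on `W × ZMod 2`. -/
noncomputable def bbFun (i : I) : W × ZMod 2 → W × ZMod 2 :=
  fun p => (s i * p.1 * s i, p.2 + (if p.1 = s i then 1 else 0))

lemma bbFun_invol (i : I) : Function.Involutive (bbFun cs i) := by
  intro p
  obtain ⟨w, ε⟩ := p
  have h : s i * s i = 1 := cs.simple_mul_simple_self i
  have hc : (s i * w * s i = s i) ↔ (w = s i) := by
    constructor
    · intro hh
      have : w = (s i)⁻¹ * (s i * w * s i) * (s i)⁻¹ := by group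
      rw [this, hh, cs.inv_simple, h, one_mul]
    · intro hh
      rw [hh, h, one_mul]
  simp only [bbFun]
  refine Prod.ext ?_ ?_
  · show s i * (s i * w * s i) * s i = w
    have : s i * (s i * w * s i) * s i = (s i * s i) * w * (s i * s i) := by group
    rw [this, h, one_mul, mul_one]
  · show (ε + (if w = s i then 1 else 0)) + (if s i * w * s i = s i then 1 else 0) = ε
    rw [if_congr hc rfl rfl]
    by_cases hw : w = s i <;> simp [hw]
    rw [add_assoc]
    norm_num
    exact rfl

/-- The Björner–Brenti permutation as an `Equiv.Perm`. -/
noncomputable def bbPerm (i : I) : Equiv.Perm (W × ZMod 2) :=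
  (bbFun_invol cs i).toPerm

lemma bbPerm_apply (i : I) (p : W × ZMod 2) :
    bbPerm cs i p = (s i * p.1 * s i, p.2 + (if p.1 = s i then 1 else 0)) := rfl


lemma simple_comm_pow (i j : I) (k : ℕ) :
    s j * (s i * s j) ^ k = ((s i * s j)⁻¹) ^ k * s j := by
  induction k with
  | zero => simp
  | succ k ih =>
    have h1 : s j * (s i * s j) = (s i * s j)⁻¹ * s j := by
      rw [mul_inv_rev, cs.inv_simple, cs.inv_simple]; group
    rw [pow_succ, ← mul_assoc, ih, mul_assoc, h1, ← mul_assoc, ← pow_succ]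

lemma conj_simple_pow (i j : I) (k : ℕ) :
    ((s i * s j) ^ k)⁻¹ * s j * (s i * s j) ^ k = ((s i * s j)⁻¹) ^ (2 * k) * s j := by
  rw [mul_assoc, simple_comm_pow, ← inv_pow, ← mul_assoc, ← pow_add, two_mul]

lemma bb_cond1 (i j : I) (k : ℕ) (w : W) :
    ((s i * s j) ^ k * w * ((s i * s j) ^ k)⁻¹ = s j) ↔
      (w = ((s i * s j)⁻¹) ^ (2 * k) * s j) := by
  rw [← conj_simple_pow cs i j k]
  constructor
  · intro h
    have h2 := congrArg
      (fun z => ((s i * s j) ^ k)⁻¹ * z * (s i * s j) ^ k) h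
    have hred : ((s i * s j) ^ k)⁻¹ * ((s i * s j) ^ k * w * ((s i * s j) ^ k)⁻¹) *
        (s i * s j) ^ k = w := by group
    rw [hred] at h2
    exact h2
  · intro h; rw [h]; group

lemma bb_cond2 (i j : I) (k : ℕ) (w : W) :
    (s j * ((s i * s j) ^ k * w * ((s i * s j) ^ k)⁻¹) * s j = s i) ↔
      (w = ((s i * s j)⁻¹) ^ (2 * k + 1) * s j) := by
  have hjj : s j * s j = 1 := cs.simple_mul_simple_self j
  have hsji : ((s i * s j) ^ k)⁻¹ * (s j * s i * s j) * (s i * s j) ^ k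
      = ((s i * s j)⁻¹) ^ (2 * k + 1) * s j := by
    have h1 : s j * s i * s j = (s i * s j)⁻¹ * s j := by
      rw [mul_inv_rev, cs.inv_simple, cs.inv_simple]
    have h2 := conj_simple_pow cs i j k
    calc ((s i * s j) ^ k)⁻¹ * (s j * s i * s j) * (s i * s j) ^ k
        = ((s i * s j) ^ k)⁻¹ * ((s i * s j)⁻¹ * s j) * (s i * s j) ^ k := by rw [h1]
      _ = (s i * s j)⁻¹ * (((s i * s j) ^ k)⁻¹ * s j * (s i * s j) ^ k) := by
          have hcomm : ((s i * s j) ^ k)⁻¹ * (s i * s j)⁻¹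
              = (s i * s j)⁻¹ * ((s i * s j) ^ k)⁻¹ := by
            rw [← mul_inv_rev, ← mul_inv_rev, ← pow_succ, ← pow_succ']
          rw [show ((s i * s j) ^ k)⁻¹ * ((s i * s j)⁻¹ * s j) * (s i * s j) ^ k
              = (((s i * s j) ^ k)⁻¹ * (s i * s j)⁻¹) * s j * (s i * s j) ^ k by group,
            hcomm]
          group
      _ = (s i * s j)⁻¹ * (((s i * s j)⁻¹) ^ (2 * k) * s j) := by rw [h2]
      _ = ((s i * s j)⁻¹) ^ (2 * k + 1) * s j := by rw [pow_succ']; group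
  rw [← hsji]
  constructor
  · intro h
    have h2 := congrArg
      (fun z => ((s i * s j) ^ k)⁻¹ * (s j * z * s j) * (s i * s j) ^ k) h
    have hred : ((s i * s j) ^ k)⁻¹ *
        (s j * (s j * ((s i * s j) ^ k * w * ((s i * s j) ^ k)⁻¹) * s j) * s j) *
        (s i * s j) ^ k = w := by
      calc ((s i * s j) ^ k)⁻¹ *
          (s j * (s j * ((s i * s j) ^ k * w * ((s i * s j) ^ k)⁻¹) * s j) * s j) *
          (s i * s j) ^ k
          = ((s i * s j) ^ k)⁻¹ * ((s j * s j) *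
            ((s i * s j) ^ k * w * ((s i * s j) ^ k)⁻¹) * (s j * s j)) *
            (s i * s j) ^ k := by group
        _ = ((s i * s j) ^ k)⁻¹ *
            ((s i * s j) ^ k * w * ((s i * s j) ^ k)⁻¹) *
            (s i * s j) ^ k := by rw [hjj, one_mul, mul_one]
        _ = w := by group
    rw [← hred]
    exact h2
  · intro h
    rw [h]
    calc s j * ((s i * s j) ^ k *
          (((s i * s j) ^ k)⁻¹ * (s j * s i * s j) * (s i * s j) ^ k) *
          ((s i * s j) ^ k)⁻¹) * s j
        = (s j * s j) * s i * (s j * s j) := by group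
      _ = s i := by rw [hjj, one_mul, mul_one]

lemma bbPow_apply (i j : I) (k : ℕ) (w : W) (ε : ZMod 2) :
    ((bbPerm cs i * bbPerm cs j) ^ k) (w, ε) =
      ((s i * s j) ^ k * w * ((s i * s j) ^ k)⁻¹,
        ε + ∑ r ∈ Finset.range (2 * k),
          (if w = ((s i * s j)⁻¹) ^ r * s j then 1 else 0)) := by
  induction k with
  | zero => simp
  | succ k ih =>
    rw [pow_succ', Equiv.Perm.mul_apply, ih, Equiv.Perm.mul_apply, bbPerm_apply, bbPerm_apply]
    dsimp only
    refine Prod.ext ?_ ?_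
    · dsimp only
      have h1 : s j * s i = (s i * s j)⁻¹ := by
        rw [mul_inv_rev, cs.inv_simple, cs.inv_simple]
      have key : ∀ (g u : W), g * (g ^ k * u * (g ^ k)⁻¹) * g⁻¹
          = g ^ (k + 1) * u * (g ^ (k + 1))⁻¹ := by
        intro g u; rw [pow_succ']; group
      calc s i * (s j * ((s i * s j) ^ k * w * ((s i * s j) ^ k)⁻¹) * s j) * s i
          = (s i * s j) * ((s i * s j) ^ k * w * ((s i * s j) ^ k)⁻¹) * (s j * s i) := by
            group
        _ = (s i * s j) * ((s i * s j) ^ k * w * ((s i * s j) ^ k)⁻¹) * (s i * s j)⁻¹ := by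
            rw [h1]
        _ = (s i * s j) ^ (k + 1) * w * ((s i * s j) ^ (k + 1))⁻¹ := key _ _
    · dsimp only
      rw [if_congr (bb_cond1 cs i j k w) rfl rfl, if_congr (bb_cond2 cs i j k w) rfl rfl]
      have h2k : 2 * (k + 1) = (2 * k) + 1 + 1 := by ring
      rw [h2k, Finset.sum_range_succ, Finset.sum_range_succ]
      ring

lemma bb_liftable : M.IsLiftable (bbPerm cs) := by
  intro i j
  apply Equiv.ext
  rintro ⟨w, ε⟩
  rw [bbPow_apply, cs.simple_mul_simple_pow i j]
  have hginv : ((s i * s j)⁻¹) ^ (M i j) = 1 := by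
    rw [inv_pow, cs.simple_mul_simple_pow i j, inv_one]
  refine Prod.ext ?_ ?_
  · simp
  · dsimp only
    rw [two_mul, Finset.sum_range_add]
    have heq : ∀ r ∈ Finset.range (M i j),
        (if w = ((s i * s j)⁻¹) ^ (M i j + r) * s j then (1 : ZMod 2) else 0) =
          (if w = ((s i * s j)⁻¹) ^ r * s j then 1 else 0) := by
      intro r _
      apply if_congr _ rfl rfl
      rw [pow_add, hginv, one_mul]
    rw [Finset.sum_congr rfl heq]
    show ε + (_ + _) = (w, ε).2
    rw [← two_mul]
    show ε + 2 * _ = ε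
    rw [show (2 : ZMod 2) = 0 from rfl, zero_mul, add_zero]

/-- The Björner–Brenti homomorphism `W →* Perm (W × ZMod 2)`. -/
noncomputable def bbHom : W →* Equiv.Perm (W × ZMod 2) :=
  cs.lift ⟨bbPerm cs, bb_liftable cs⟩

lemma bbHom_wordProd (ω : List I) (t : W) (ε : ZMod 2) :
    bbHom cs (π ω) (t, ε) = (π ω * t * (π ω)⁻¹, ε + nP cs ω t) := by
  induction ω with
  | nil => simp [bbHom]
  | cons a ω ih =>
    rw [cs.wordProd_cons, map_mul, Equiv.Perm.mul_apply, ih]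
    have hlift : bbHom cs (s a) = bbPerm cs a := cs.lift_apply_simple (bb_liftable cs) a
    rw [hlift, bbPerm_apply]
    dsimp only
    refine Prod.ext ?_ ?_
    · dsimp only
      rw [mul_inv_rev, cs.inv_simple]
      group
    · dsimp only
      rw [nP_cons]
      have hcond : (π ω * t * (π ω)⁻¹ = s a) ↔ (t = (π ω)⁻¹ * s a * π ω) := by
        constructor
        · intro h; rw [← h]; group
        · intro h; rw [h]; group
      rw [if_congr hcond rfl rfl]
      ring

lemma nP_eq_of_wordProd_eq {ω₁ ω₂ : List I} (h : π ω₁ = π ω₂) (t : W) :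
    nP cs ω₁ t = nP cs ω₂ t := by
  have h1 := bbHom_wordProd cs ω₁ t 0
  have h2 := bbHom_wordProd cs ω₂ t 0
  rw [h] at h1
  rw [h1] at h2
  have := congrArg Prod.snd h2
  simpa using this

lemma nP_singleton (a : I) (t : W) :
    nP cs [a] t = (if t = s a then 1 else 0) := by
  rw [show ([a] : List I) = a :: [] from rfl, nP_cons]
  simp

lemma nP_palindrome (v : List I) (i : I) :
    nP cs (v ++ i :: v.reverse) (π v * s i * (π v)⁻¹) = 1 := by
  induction v with
  | nil =>
    simp only [List.nil_append, List.reverse_nil, CoxeterSystem.wordProd_nil, one_mul,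
      inv_one, mul_one]
    rw [nP_singleton]
    simp
  | cons a v ih =>
    have hz : (a :: v) ++ i :: (a :: v).reverse = a :: ((v ++ i :: v.reverse) ++ [a]) := by
      simp
    rw [hz]
    set r : W := π v * s i * (π v)⁻¹ with hr
    have hrr : r * r = 1 := by
      rw [hr]
      have h0 : π v * s i * (π v)⁻¹ * (π v * s i * (π v)⁻¹)
          = π v * (s i * s i) * (π v)⁻¹ := by group
      rw [h0, cs.simple_mul_simple_self i, mul_one, mul_inv_cancel]
    have hrinv : r⁻¹ = r := by
      rw [← mul_one r⁻¹, ← hrr, ← mul_assoc, inv_mul_cancel, one_mul]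
    have hπz : π (v ++ i :: v.reverse) = r := by
      rw [cs.wordProd_append, cs.wordProd_cons, cs.wordProd_reverse, hr]
      group
    have ht : π (a :: v) * s i * (π (a :: v))⁻¹ = s a * r * s a := by
      rw [cs.wordProd_cons, hr, mul_inv_rev, cs.inv_simple]
      group
    have hπza : π ((v ++ i :: v.reverse) ++ [a]) = r * s a := by
      rw [cs.wordProd_append, hπz, cs.wordProd_singleton]
    have hred : s a * (s a * r * s a) * s a = r := by
      have h3 : s a * (s a * r * s a) * s a = (s a * s a) * r * (s a * s a) := by group
      rw [h3, cs.simple_mul_simple_self a, one_mul, mul_one]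
    rw [ht, nP_cons, nP_append, hπza]
    have hconj : π [a] * (s a * r * s a) * (π [a])⁻¹ = r := by
      rw [cs.wordProd_singleton, cs.inv_simple]
      exact hred
    rw [hconj, ih, nP_singleton]
    have hcond1 : (s a * r * s a = s a) ↔ (r = s a) := by
      constructor
      · intro h
        have h2 := congrArg (fun z => s a * z * s a) h
        rw [hred] at h2
        rw [h2, cs.simple_mul_simple_self a, one_mul]
      · intro h
        rw [h, cs.simple_mul_simple_self a, one_mul]
    have hlast : (s a * r * s a = (r * s a)⁻¹ * s a * (r * s a)) ↔ (r = s a) := by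
      have hrhs : (r * s a)⁻¹ * s a * (r * s a) = (s a * r * s a) * (r * s a) := by
        rw [mul_inv_rev, cs.inv_simple, hrinv]
      rw [hrhs, left_eq_mul, mul_eq_one_iff_eq_inv, cs.inv_simple]
    rw [if_congr hcond1 rfl rfl, if_congr hlast rfl rfl]
    by_cases hc : r = s a
    · simp only [hc, if_pos rfl]
      decide
    · simp [hc]

lemma mem_rightInvSeq_of_isRightInversion {v : W} {k : I} {w : W}
    (hlen : ℓ (w * (v * s k * v⁻¹)) < ℓ w) {ω : List I}
    (hω : cs.IsReduced ω) (hπ : π ω = w) : v * s k * v⁻¹ ∈ cs.rightInvSeq ω := by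
  set t : W := v * s k * v⁻¹ with hrt
  have htt : t * t = 1 := by
    rw [hrt]
    have h0 : v * s k * v⁻¹ * (v * s k * v⁻¹) = v * (s k * s k) * v⁻¹ := by group
    rw [h0, cs.simple_mul_simple_self k, mul_one, mul_inv_cancel]
  obtain ⟨ωu, hωu_red, hωu⟩ := cs.exists_reduced_word' (w * t)
  obtain ⟨ωv, _, hv⟩ := cs.exists_reduced_word' v
  set ωt : List I := ωv ++ k :: ωv.reverse with hωt
  have hπt : π ωt = t := by
    rw [hωt, cs.wordProd_append, cs.wordProd_cons, cs.wordProd_reverse, hrt, hv]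
    group
  have hcat : π (ωu ++ ωt) = w := by
    rw [cs.wordProd_append, ← hωu, hπt, mul_assoc, htt, mul_one]
  have h1 : nP cs ω t = nP cs (ωu ++ ωt) t := by
    apply nP_eq_of_wordProd_eq
    rw [hπ, hcat]
  have h3 : π ωt * t * (π ωt)⁻¹ = t := by
    have hti : t⁻¹ = t := by
      rw [← mul_one t⁻¹, ← htt, ← mul_assoc, inv_mul_cancel, one_mul]
    rw [hπt, hti, mul_assoc, htt, mul_one]
  have h4 : nP cs ωt t = 1 := by
    have hpal := nP_palindrome cs ωv k
    rw [← hv] at hpal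
    exact hpal
  have h5 : nP cs ωu t = 0 := by
    by_contra hne
    have hmem : t ∈ cs.rightInvSeq ωu := by
      by_contra hmem
      have hcnt : (cs.rightInvSeq ωu).count t = 0 := List.count_eq_zero.mpr hmem
      exact hne (by simp [nP, hcnt])
    have hinv := cs.isRightInversion_of_mem_rightInvSeq hωu_red hmem
    have hlt : ℓ (π ωu * t) < ℓ (π ωu) := hinv.2
    rw [← hωu, mul_assoc, htt, mul_one] at hlt
    omega
  have hfin : nP cs ω t = 1 := by
    rw [h1, nP_append, h3, h4, h5, zero_add]
  by_contra hmem
  have hcnt : (cs.rightInvSeq ω).count t = 0 := List.count_eq_zero.mpr hmem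
  rw [show nP cs ω t = ((cs.rightInvSeq ω).count t : ZMod 2) from rfl, hcnt] at hfin
  exact absurd hfin (by decide)

lemma mem_leftInvSeq_of_isLeftInversion {v : W} {k : I} {w : W}
    (hlen : ℓ ((v * s k * v⁻¹) * w) < ℓ w) {ω : List I}
    (hω : cs.IsReduced ω) (hπ : π ω = w) : v * s k * v⁻¹ ∈ cs.leftInvSeq ω := by
  set t : W := v * s k * v⁻¹ with hrt
  have htt : t * t = 1 := by
    rw [hrt]
    have h0 : v * s k * v⁻¹ * (v * s k * v⁻¹) = v * (s k * s k) * v⁻¹ := by group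
    rw [h0, cs.simple_mul_simple_self k, mul_one, mul_inv_cancel]
  have hti : t⁻¹ = t := by
    rw [← mul_one t⁻¹, ← htt, ← mul_assoc, inv_mul_cancel, one_mul]
  have hlen' : ℓ (w⁻¹ * t) < ℓ w⁻¹ := by
    have he : w⁻¹ * t = (t * w)⁻¹ := by rw [mul_inv_rev, hti]
    rw [he, cs.length_inv, cs.length_inv]
    exact hlen
  have hmem := mem_rightInvSeq_of_isRightInversion cs (v := v) (k := k) (w := w⁻¹)
    (by rw [← hrt]; exact hlen') ((cs.isReduced_reverse_iff ω).mpr hω)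
    (by rw [cs.wordProd_reverse, hπ])
  rw [← hrt] at hmem
  rw [cs.rightInvSeq_reverse, List.mem_reverse] at hmem
  exact hmem


end SEAux

section GeomAux

variable (gr : GeomRep cs V)

lemma rho_inv_cancel (w : W) (v : V) : gr.ρ w (gr.ρ w⁻¹ v) = v := by
  have h : gr.ρ w * gr.ρ w⁻¹ = 1 := by rw [← map_mul, mul_inv_cancel, map_one]
  calc gr.ρ w (gr.ρ w⁻¹ v) = (gr.ρ w * gr.ρ w⁻¹) v := rfl
    _ = v := by rw [h]; rfl

lemma refl_formula (w : W) (j : I) (v : V) :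
    gr.ρ (w * cs.simple j * w⁻¹) v
      = v - (2 * gr.B (gr.ρ w (gr.α j)) v) • gr.ρ w (gr.α j) := by
  have hmm : gr.ρ (w * cs.simple j * w⁻¹) v
      = gr.ρ w (gr.ρ (cs.simple j) (gr.ρ w⁻¹ v)) := by
    rw [map_mul, map_mul]; rfl
  have hB : gr.B (gr.α j) (gr.ρ w⁻¹ v) = gr.B (gr.ρ w (gr.α j)) v := by
    conv_rhs => rw [← rho_inv_cancel gr w v]
    rw [gr.ρ_isom]
  rw [hmm, gr.ρ_simple j, map_sub, map_smul, rho_inv_cancel, hB]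

lemma rfl'_spec {γ : V} (hroot : γ ∈ gr.roots) :
    ∀ v, gr.ρ (gr.rfl' γ) v = v - (2 * gr.B γ v) • γ := by
  obtain ⟨w, j, hh⟩ := hroot
  subst hh
  exact Classical.epsilon_spec
    (p := fun t : W => ∀ v : V, gr.ρ t v
      = v - (2 * gr.B (gr.ρ w (gr.α j)) v) • (gr.ρ w (gr.α j)))
    ⟨w * cs.simple j * w⁻¹, fun v => refl_formula gr w j v⟩

lemma rfl'_eq (w : W) (j : I) :
    gr.rfl' (gr.ρ w (gr.α j)) = w * cs.simple j * w⁻¹ := by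
  apply gr.faithful
  apply LinearMap.ext
  intro v
  rw [rfl'_spec gr ⟨w, j, rfl⟩ v, refl_formula]

end GeomAux

/-- If `sx ⋖ x` and `s_γ x ⋖ x` in Bruhat order, then `γ = α_s` or `s·s_γ x ⋖ s_γ x`. -/
theorem bruhat_lifting_cor (gr : GeomRep cs V) (i : I) (x : W) (γ : V)
    (hγ : γ ∈ gr.posRoots)
    (h1 : cs.length x = cs.length (cs.simple i * x) + 1)
    (h2 : cs.length x = cs.length (gr.rfl' γ * x) + 1) :
    γ = gr.α i ∨
      cs.length (gr.rfl' γ * x) = cs.length (cs.simple i * (gr.rfl' γ * x)) + 1 := by 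
  obtain ⟨hγroot, hγpos⟩ := hγ
  obtain ⟨w, j, hγeq⟩ := hγroot
  have hspec : ∀ v, gr.ρ (gr.rfl' γ) v = v - (2 * gr.B γ v) • γ :=
    rfl'_spec gr ⟨w, j, hγeq⟩
  have ht : gr.rfl' γ = w * cs.simple j * w⁻¹ := by
    rw [hγeq]; exact rfl'_eq gr w j
  rcases cs.length_simple_mul (gr.rfl' γ * x) i with hcase | hcase
  · -- hard case : `ℓ (s i * (t * x)) = ℓ (t * x) + 1`; show `γ = gr.α i`
    left
    obtain ⟨ω', hω'red, hω'⟩ := cs.exists_reduced_word' (cs.simple i * x)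
    have hx : cs.wordProd (i :: ω') = x := by
      rw [cs.wordProd_cons, ← hω', ← mul_assoc, cs.simple_mul_simple_self, one_mul]
    have hlsix : cs.length (cs.simple i * x) = ω'.length := by
      rw [hω']; exact hω'red
    have hxred : cs.IsReduced (i :: ω') := by
      show cs.length (cs.wordProd (i :: ω')) = (i :: ω').length
      rw [hx, List.length_cons]
      omega
    have hmem : gr.rfl' γ ∈ cs.leftInvSeq (i :: ω') := by
      rw [ht]
      apply mem_leftInvSeq_of_isLeftInversion cs _ hxred hx
      rw [← ht]
      omega
    obtain ⟨kidx, hk, hkt⟩ := List.mem_iff_getElem.mp hmem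
    have hkD : (cs.leftInvSeq (i :: ω')).getD kidx 1 = gr.rfl' γ := by
      rw [List.getD_eq_getElem _ _ hk, hkt]
    have herase : gr.rfl' γ * x = cs.wordProd ((i :: ω').eraseIdx kidx) := by
      rw [← hkD, ← hx]
      exact cs.getD_leftInvSeq_mul_wordProd _ _
    rw [cs.length_leftInvSeq, List.length_cons] at hk
    cases kidx with
    | zero =>
      -- the deleted letter is the first one: `rfl' γ = s i`, whence `γ = α i`
      have hlisc : cs.leftInvSeq (i :: ω')
          = cs.simple i :: (cs.leftInvSeq ω').map (MulAut.conj (cs.simple i)) := rfl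
      have hts : gr.rfl' γ = cs.simple i := by
        rw [← hkD, hlisc, List.getD_cons_zero]
      have hBγγ : gr.B γ γ = 1 := by
        rw [hγeq, gr.ρ_isom, gr.norm_one]
      have hkey : ∀ v, (2 * gr.B (gr.α i) v) • gr.α i = (2 * gr.B γ v) • γ := by
        intro v
        have e1 := hspec v
        rw [hts, gr.ρ_simple i v] at e1
        exact sub_right_inj.mp e1
      have hγc : γ = (gr.B (gr.α i) γ) • gr.α i := by
        have h := hkey γ
        rw [hBγγ, mul_one] at h
        calc γ = ((2:ℝ)⁻¹ * 2) • γ := by norm_num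
          _ = (2:ℝ)⁻¹ • ((2:ℝ) • γ) := by rw [smul_smul]
          _ = (2:ℝ)⁻¹ • ((2 * gr.B (gr.α i) γ) • gr.α i) := by rw [← h]
          _ = ((2:ℝ)⁻¹ * (2 * gr.B (gr.α i) γ)) • gr.α i := by rw [smul_smul]
          _ = (gr.B (gr.α i) γ) • gr.α i := by
              rw [show (2:ℝ)⁻¹ * (2 * gr.B (gr.α i) γ) = gr.B (gr.α i) γ by ring]
      set c : ℝ := gr.B (gr.α i) γ with hcdef
      have hc2 : c * c = 1 := by
        have hb : gr.B γ γ = c * (c * gr.B (gr.α i) (gr.α i)) := by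
          conv_lhs => rw [hγc]
          rw [LinearMap.map_smul₂, map_smul, smul_eq_mul, smul_eq_mul]
        rw [hBγγ, gr.norm_one, mul_one] at hb
        exact hb.symm
      rcases mul_self_eq_one_iff.mp hc2 with hc1 | hcneg
      · rw [hγc, hc1, one_smul]
      · -- `γ = -α i` contradicts positivity
        exfalso
        have hγneg : γ = -gr.α i := by
          rw [hγc, hcneg, neg_smul, one_smul]
        obtain ⟨sfin, cf, hsub, hcnn, hsum⟩ := hγpos
        have hFex : ∀ u ∈ sfin, ∃ k0 : I, gr.α k0 = u := by
          intro u hu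
          exact hsub hu
        set F : V → I := fun u => if h : ∃ k0, gr.α k0 = u then h.choose else i with hF
        have hFspec : ∀ u ∈ sfin, gr.α (F u) = u := by
          intro u hu
          have hex : ∃ k0, gr.α k0 = u := hFex u hu
          rw [hF]
          dsimp only
          rw [dif_pos hex]
          exact hex.choose_spec
        set f : I →₀ ℝ := (∑ u ∈ sfin, Finsupp.single (F u) (cf u)) + Finsupp.single i 1
          with hf
        have hsumnn : ∀ k0 : I, 0 ≤ (∑ u ∈ sfin, Finsupp.single (F u) (cf u)) k0 := by
          intro k0
          rw [Finsupp.finset_sum_apply]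
          apply Finset.sum_nonneg
          intro u hu
          rw [Finsupp.single_apply]
          split
          · exact hcnn u hu
          · exact le_refl 0
        have hfnn : ∀ k0 : I, 0 ≤ f k0 := by
          intro k0
          rw [hf, Finsupp.add_apply]
          apply add_nonneg (hsumnn k0)
          rw [Finsupp.single_apply]
          split
          · exact zero_le_one
          · exact le_refl 0
        have hflc : (f.sum fun k0 ck => ck • gr.α k0) = γ + gr.α i := by
          have hlin : (f.sum fun k0 ck => ck • gr.α k0)
              = Finsupp.linearCombination ℝ gr.α f :=
            (Finsupp.linearCombination_apply ℝ f).symm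
          rw [hlin, hf, map_add, map_sum, Finsupp.linearCombination_single, one_smul]
          congr 1
          rw [hsum]
          apply Finset.sum_congr rfl
          intro u hu
          rw [Finsupp.linearCombination_single, hFspec u hu]
        have hzero : f = 0 := by
          apply gr.posIndep f hfnn
          rw [hflc, hγneg, neg_add_cancel]
        have hfi0 : f i = 0 := by rw [hzero]; rfl
        rw [hf, Finsupp.add_apply, Finsupp.single_eq_same] at hfi0
        have := hsumnn i
        linarith
    | succ kk =>
      -- deleting a later letter would make `s i * (rfl' γ * x)` too short
      exfalso
      have herase' : gr.rfl' γ * x = cs.simple i * cs.wordProd (ω'.eraseIdx kk) := by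
        rw [herase, List.eraseIdx_cons_succ, cs.wordProd_cons]
      have hsit : cs.simple i * (gr.rfl' γ * x) = cs.wordProd (ω'.eraseIdx kk) := by
        rw [herase', ← mul_assoc, cs.simple_mul_simple_self, one_mul]
      have hle : cs.length (cs.simple i * (gr.rfl' γ * x)) ≤ (ω'.eraseIdx kk).length := by
        rw [hsit]; exact cs.length_wordProd_le _
      have hkk : kk < ω'.length := by omega
      have hlenerase : (ω'.eraseIdx kk).length + 1 = ω'.length :=
        List.length_eraseIdx_add_one hkk
      omega
  · -- easy case : the covering `s i * (rfl' γ * x) ⋖ rfl' γ * x` holds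
    right
    omega


end CoxGar
end
end

section
/- Let x, y be elements of a Coxeter group W such that the join x ∨ y in right weak order exists, and let β ∈ Φ⁺ with ℓ(s_β (x∨y)) = ℓ(x∨y) − 1. Then ℓ(s_β x) = ℓ(x) − 1 or ℓ(s_β y) = ℓ(y) − 1. -/
open scoped Classical

noncomputable section

namespace CoxGar

variable {I : Type*} {W : Type*} [Group W] {M : CoxeterMatrix I}
variable {V : Type*} [AddCommGroup V] [Module ℝ V]

variable {cs : CoxeterSystem M W}



section AuxCoxGar

open List CoxeterSystem

variable (cs)

local prefix:100 "s" => cs.simple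
local prefix:100 "π" => cs.wordProd
local prefix:100 "ℓ" => cs.length
local prefix:100 "ris" => cs.rightInvSeq

/-- One step of the reflection cocycle permutation. -/
noncomputable def sigmaFun (i : I) : W × ZMod 2 → W × ZMod 2 :=
  fun p => (s i * p.1 * s i, p.2 + if p.1 = s i then 1 else 0)

theorem sigmaFun_involutive (i : I) : Function.Involutive (sigmaFun cs i) := by
  intro p
  unfold sigmaFun
  have h1 : s i * (s i * p.1 * s i) * s i = p.1 := by
    simp only [← mul_assoc, cs.simple_mul_simple_self, one_mul]
    exact cs.simple_mul_simple_cancel_right i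
  have h2 : (s i * p.1 * s i = s i) ↔ (p.1 = s i) := by
    constructor
    · intro h
      calc p.1 = s i * (s i * p.1 * s i) * s i := h1.symm
        _ = s i * s i * s i := by rw [h]
        _ = s i := by rw [cs.simple_mul_simple_self]; simp
    · intro h; rw [h, cs.simple_mul_simple_self, one_mul]
  apply Prod.ext
  · exact h1
  · show p.2 + _ + _ = p.2
    by_cases hp : p.1 = s i
    · rw [if_pos hp, if_pos (h2.mpr hp), add_assoc]
      norm_num
      decide
    · rw [if_neg hp, if_neg (fun hh => hp (h2.mp hh)), add_zero, add_zero]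

/-- The reflection cocycle permutation associated to a simple generator. -/
noncomputable def sigma (i : I) : Equiv.Perm (W × ZMod 2) :=
  (sigmaFun_involutive cs i).toPerm

@[simp] theorem sigma_apply (i : I) (p : W × ZMod 2) :
    sigma cs i p = (s i * p.1 * s i, p.2 + if p.1 = s i then 1 else 0) := rfl

/-- Product of cocycle permutations along a word, evaluated. -/
theorem prod_map_sigma_apply (ω : List I) (q : W) (d : ZMod 2) :
    ((ω.map (sigma cs)).prod) (q, d) =
      ((π ω) * q * (π ω)⁻¹, d + ((ris ω).count q : ZMod 2)) := by
  induction ω generalizing d with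
  | nil => simp
  | cons i ω ih =>
      rw [List.map_cons, List.prod_cons, Equiv.Perm.mul_apply, ih]
      have hcount : ((cs.rightInvSeq (i :: ω)).count q : ℕ)
          = (ris ω).count q + (if (π ω) * q * (π ω)⁻¹ = s i then 1 else 0) := by
        show ((((π ω)⁻¹ * (s i) * (π ω)) :: ris ω).count q) = _
        rw [List.count_cons]
        congr 1
        have hiff : ((π ω)⁻¹ * (s i) * (π ω) = q) ↔ ((π ω) * q * (π ω)⁻¹ = s i) := by
          constructor
          · rintro rfl; group
          · intro h; rw [← h]; group
        by_cases h : (π ω) * q * (π ω)⁻¹ = s i <;> simp [hiff, h]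
      rw [sigma_apply]
      apply Prod.ext
      · show s i * ((π ω) * q * (π ω)⁻¹) * s i = (π (i :: ω)) * q * (π (i :: ω))⁻¹
        rw [cs.wordProd_cons, mul_inv_rev, cs.inv_simple]
        group
      · show d + _ + _ = d + _
        rw [hcount]
        push_cast
        ring


theorem drop_alternatingWord (i i' : I) (k n : ℕ) (h : k ≤ n) :
    (alternatingWord i i' n).drop k = alternatingWord i i' (n - k) := by
  induction k generalizing n with
  | zero => simp
  | succ k ih =>
    obtain ⟨m, rfl⟩ : ∃ m, n = m + 1 := ⟨n - 1, by omega⟩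
    rw [alternatingWord_succ', List.drop_succ_cons, ih m (by omega)]
    congr 1
    omega

theorem paw_even (i i' : I) (k : ℕ) :
    π (alternatingWord i i' (2 * k)) = (s i * s i') ^ k := by
  rw [cs.prod_alternatingWord_eq_mul_pow, if_pos ⟨k, by ring⟩, one_mul,
    Nat.mul_div_cancel_left k (by norm_num)]

theorem paw_odd (i i' : I) (k : ℕ) :
    π (alternatingWord i i' (2 * k + 1)) = s i' * (s i * s i') ^ k := by
  rw [cs.prod_alternatingWord_eq_mul_pow, if_neg (by rw [Nat.even_iff]; omega)]
  have h2 : (2 * k + 1) / 2 = k := by omega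
  rw [h2]

theorem getD_ris_aw (i i' : I) (j n : ℕ) (h : j < n) :
    (ris (alternatingWord i i' n)).getD j 1 =
      (π (alternatingWord i i' (n - j - 1)))⁻¹ * π (alternatingWord i i' (n - j)) := by
  rw [cs.getD_rightInvSeq]
  have hdrop1 : (alternatingWord i i' n).drop (j + 1) = alternatingWord i i' (n - j - 1) := by
    have h0 := drop_alternatingWord i i' (j+1) n (by omega)
    rwa [show n - (j + 1) = n - j - 1 by omega] at h0
  have hdrop : (alternatingWord i i' n).drop j = alternatingWord i i' (n - j) :=
    drop_alternatingWord i i' j n (by omega)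
  have hsucc : n - j = (n - j - 1) + 1 := by omega
  have hget : (alternatingWord i i' n)[j]? =
      some (if Even (n - j - 1) then i' else i) := by
    have h0 : (alternatingWord i i' n)[j]? = ((alternatingWord i i' n).drop j)[0]? := by
      rw [List.getElem?_drop]; norm_num
    rw [h0, hdrop, hsucc, alternatingWord_succ']
    rfl
  rw [hget, hdrop1]
  simp only [Option.map_some, Option.getD_some]
  rw [mul_assoc]
  congr 1
  rw [hsucc, alternatingWord_succ', cs.wordProd_cons, Nat.add_sub_cancel]

theorem ris_aw_period (i i' : I) (n : ℕ) (hn : 1 ≤ n) :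
    (π (alternatingWord i i' (n + M i i' - 1)))⁻¹ * π (alternatingWord i i' (n + M i i')) =
      (π (alternatingWord i i' (n - 1)))⁻¹ * π (alternatingWord i i' n) := by
  set a := s i with ha
  set b := s i' with hb
  set q := a * b with hqdef
  have hq : q ^ (M i i') = 1 := cs.simple_mul_simple_pow i i'
  have hbb : b * b = 1 := cs.simple_mul_simple_self i'
  have hqb : b * q * b = q⁻¹ := by
    rw [hqdef, mul_inv_rev, cs.inv_simple, cs.inv_simple]
    rw [show b * (a * b) * b = b * a * (b * b) by group, hbb, mul_one]
  have hbq : ∀ m : ℕ, b * q ^ m * b = (q ^ m)⁻¹ := by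
    intro m
    induction m with
    | zero => simp [hbb]
    | succ m ih =>
      have step : b * q ^ (m + 1) * b = (b * q ^ m * b) * (b * q * b) := by
        rw [pow_succ]
        rw [show (b * q ^ m * b) * (b * q * b) = b * q ^ m * (b * b) * (q * b) by group, hbb,
          mul_one]
        group
      rw [step, ih, hqb, ← mul_inv_rev, ← pow_succ']
  have hinv : ∀ k : ℕ, (b * q ^ k)⁻¹ = (q ^ k)⁻¹ * b := by
    intro k
    rw [mul_inv_rev, hb, cs.inv_simple]
  have hkey : ∀ α β e f E F : ℕ, α + β = M i i' → E = e + α → F = f + β →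
      (q ^ E)⁻¹ * b * q ^ F = (q ^ e)⁻¹ * b * q ^ f := by
    rintro α β e f E F hsum rfl rfl
    have h1 : (q ^ α)⁻¹ * b * q ^ β = b := by
      have h2 : (q ^ α)⁻¹ = b * q ^ α * b := by rw [hbq]
      rw [h2, show b * q ^ α * b * b * q ^ β = b * q ^ α * (b * b) * q ^ β by group, hbb,
        mul_one, mul_assoc, ← pow_add, hsum, hq, mul_one]
    calc (q ^ (e + α))⁻¹ * b * q ^ (f + β)
        = (q ^ e)⁻¹ * ((q ^ α)⁻¹ * b * q ^ β) * q ^ f := by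
          rw [pow_add, pow_add, mul_inv_rev]
          rw [show (q ^ α)⁻¹ * (q ^ e)⁻¹ = (q ^ e)⁻¹ * (q ^ α)⁻¹ by
            rw [← mul_inv_rev, ← mul_inv_rev, ← pow_add, ← pow_add, Nat.add_comm]]
          rw [show q ^ f * q ^ β = q ^ β * q ^ f by rw [← pow_add, ← pow_add, Nat.add_comm]]
          group
    _ = (q ^ e)⁻¹ * b * q ^ f := by rw [h1]
  rcases Nat.even_or_odd n with ⟨k, hk⟩ | ⟨k, hk⟩ <;>
    rcases Nat.even_or_odd (M i i') with ⟨l, hl⟩ | ⟨l, hl⟩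
  · -- n = 2(k'+1), m = 2l
    obtain ⟨k', rfl⟩ : ∃ k', k = k' + 1 := ⟨k - 1, by omega⟩
    rw [show n + M i i' - 1 = 2 * (k' + l) + 1 by omega, show n + M i i' = 2 * (k' + l + 1) by omega,
      show n - 1 = 2 * k' + 1 by omega, show n = 2 * (k' + 1) by omega]
    rw [paw_even, paw_even, paw_odd, paw_odd, hinv, hinv]
    exact hkey l l k' (k' + 1) _ _ (by omega) rfl (by omega)
  · -- n = 2(k'+1), m = 2l+1
    obtain ⟨k', rfl⟩ : ∃ k', k = k' + 1 := ⟨k - 1, by omega⟩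
    rw [show n + M i i' - 1 = 2 * (k' + l + 1) by omega,
      show n + M i i' = 2 * (k' + l + 1) + 1 by omega,
      show n - 1 = 2 * k' + 1 by omega, show n = 2 * (k' + 1) by omega]
    rw [paw_even, paw_even, paw_odd, paw_odd, hinv, ← mul_assoc]
    exact hkey (l + 1) l k' (k' + 1) _ _ (by omega) (by omega) (by omega)
  · -- n = 2k+1, m = 2l
    rw [show n + M i i' - 1 = 2 * (k + l) by omega, show n + M i i' = 2 * (k + l) + 1 by omega,
      show n - 1 = 2 * k by omega, show n = 2 * k + 1 by omega]
    rw [paw_even, paw_even, paw_odd, paw_odd, ← mul_assoc, ← mul_assoc]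
    exact hkey l l k k _ _ (by omega) (by omega) (by omega)
  · -- n = 2k+1, m = 2l+1
    rw [show n + M i i' - 1 = 2 * (k + l) + 1 by omega,
      show n + M i i' = 2 * (k + l + 1) by omega,
      show n - 1 = 2 * k by omega, show n = 2 * k + 1 by omega]
    rw [paw_even, paw_even, paw_odd, paw_odd, hinv, ← mul_assoc]
    exact hkey l (l + 1) k k _ _ (by omega) (by omega) (by omega)


theorem ris_aw_double (i i' : I) :
    cs.rightInvSeq (alternatingWord i i' (2 * M i i')) =
      cs.rightInvSeq (alternatingWord i i' (M i i')) ++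
        cs.rightInvSeq (alternatingWord i i' (M i i')) := by
  set m := M i i' with hm
  have hlen : (cs.rightInvSeq (alternatingWord i i' (2 * m))).length = 2 * m := by
    rw [cs.length_rightInvSeq, length_alternatingWord]
  have hlen1 : (cs.rightInvSeq (alternatingWord i i' m)).length = m := by
    rw [cs.length_rightInvSeq, length_alternatingWord]
  conv_lhs => rw [← List.take_append_drop m (cs.rightInvSeq (alternatingWord i i' (2 * m)))]
  congr 1
  · -- take m = ris (aw m)
    apply List.ext_getElem
    · rw [List.length_take, hlen, hlen1]; omega
    · intro j h1 h2
      rw [List.getElem_take]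
      have hj : j < m := by rw [hlen1] at h2; exact h2
      have e1 : (cs.rightInvSeq (alternatingWord i i' (2 * m)))[j] =
          (cs.rightInvSeq (alternatingWord i i' (2 * m))).getD j 1 :=
        (List.getD_eq_getElem _ 1 (by omega)).symm
      have e2 : (cs.rightInvSeq (alternatingWord i i' m))[j] =
          (cs.rightInvSeq (alternatingWord i i' m)).getD j 1 :=
        (List.getD_eq_getElem _ 1 (by omega)).symm
      rw [e1, e2, getD_ris_aw cs i i' j (2*m) (by omega), getD_ris_aw cs i i' j m hj]
      have hper := ris_aw_period cs i i' (m - j) (by omega)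
      rw [show m - j + M i i' - 1 = 2*m - j - 1 by omega,
        show m - j + M i i' = 2*m - j by omega] at hper
      exact hper
  · rw [← cs.rightInvSeq_drop, drop_alternatingWord i i' m (2*m) (by omega),
      show 2*m - m = m by omega]

theorem sigma_liftable : M.IsLiftable (sigma cs) := by
  intro i i'
  have hword : ∀ k : ℕ, ((alternatingWord i i' (2 * k)).map (sigma cs)).prod =
      (sigma cs i * sigma cs i') ^ k := by
    intro k
    induction k with
    | zero => simp [alternatingWord]
    | succ k ih =>
      have h1 : alternatingWord i i' (2 * (k + 1)) = i :: i' :: alternatingWord i i' (2 * k) := by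
        rw [show 2 * (k + 1) = (2 * k + 1) + 1 by omega, alternatingWord_succ',
          if_neg (by rw [Nat.even_iff]; omega), alternatingWord_succ',
          if_pos (by rw [Nat.even_iff]; omega)]
      rw [h1, List.map_cons, List.map_cons, List.prod_cons, List.prod_cons, ih,
        pow_succ', mul_assoc]
  rw [← hword (M i i')]
  apply Equiv.ext
  rintro ⟨q, d⟩
  rw [prod_map_sigma_apply]
  have hπ : cs.wordProd (alternatingWord i i' (2 * M i i')) = 1 := by
    rw [paw_even]; exact cs.simple_mul_simple_pow i i'
  have hcount : (((cs.rightInvSeq (alternatingWord i i' (2 * M i i'))).count q : ℕ) : ZMod 2)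
      = 0 := by
    rw [ris_aw_double, List.count_append]
    push_cast
    rw [← two_mul]
    rw [show (2 : ZMod 2) = 0 from rfl, zero_mul]
  rw [hπ, hcount, add_zero]
  simp

/-- The reflection cocycle as a homomorphism. -/
noncomputable def phi : W →* Equiv.Perm (W × ZMod 2) :=
  cs.lift ⟨sigma cs, sigma_liftable cs⟩

theorem phi_wordProd (ω : List I) : phi cs (π ω) = ((ω.map (sigma cs)).prod) := by
  show phi cs (List.prod (ω.map cs.simple)) = _
  rw [map_list_prod, List.map_map]
  exact congrArg List.prod
    (List.map_congr_left (fun i _ => cs.lift_apply_simple (sigma_liftable cs) i))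

/-- The sign cocycle. -/
noncomputable def eta (w t : W) : ZMod 2 := ((phi cs w) (t, 0)).2

theorem eta_eq_count (ω : List I) (t : W) :
    eta cs (π ω) t = ((ris ω).count t : ZMod 2) := by
  rw [eta, phi_wordProd, prod_map_sigma_apply, zero_add]

theorem phi_apply (w q : W) (d : ZMod 2) :
    phi cs w (q, d) = (w * q * w⁻¹, d + eta cs w q) := by
  obtain ⟨ω, rfl⟩ := cs.wordProd_surjective w
  rw [phi_wordProd, prod_map_sigma_apply, eta_eq_count]

theorem eta_mul (u v t : W) :
    eta cs (u * v) t = eta cs v t + eta cs u (v * t * v⁻¹) := by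
  have h1 : phi cs (u * v) (t, 0) = phi cs u (phi cs v (t, 0)) := by
    rw [map_mul]; rfl
  rw [eta, h1, phi_apply, phi_apply, zero_add]

theorem eta_one (t : W) : eta cs 1 t = 0 := by
  rw [eta, map_one]; rfl

theorem eta_simple (i : I) (t : W) :
    eta cs (s i) t = if s i = t then 1 else 0 := by
  rw [show s i = π [i] from (cs.wordProd_singleton i).symm, eta_eq_count,
    cs.rightInvSeq_singleton]
  rw [List.count_singleton']
  by_cases h : s i = t <;> simp [h]

theorem eta_reflection_self {t : W} (ht : cs.IsReflection t) : eta cs t t = 1 := by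
  obtain ⟨w, i, rfl⟩ := ht
  set t := w * s i * w⁻¹ with hht
  have hza : ∀ x : ZMod 2, x + x = 0 := by decide
  have hzb : ∀ x y : ZMod 2, x + y = 0 → y = x := by decide
  -- eta (w⁻¹) t = eta w (s i)
  have h1 : eta cs w⁻¹ t = eta cs w (s i) := by
    have h2 := eta_mul cs w⁻¹ w (s i)
    rw [inv_mul_cancel, eta_one] at h2
    have h3 : w * s i * w⁻¹ = t := rfl
    rw [h3] at h2
    exact hzb _ _ h2.symm
  have h4 : eta cs (s i * w⁻¹) t = eta cs w⁻¹ t + eta cs (s i) (w⁻¹ * t * w⁻¹⁻¹) := by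
    exact eta_mul cs (s i) w⁻¹ t
  have h5 : w⁻¹ * t * w⁻¹⁻¹ = s i := by rw [hht]; group
  have h6 : eta cs (s i * w⁻¹) t = eta cs w (s i) + 1 := by
    rw [h4, h5, h1, eta_simple, if_pos rfl]
  have h7 : eta cs (w * (s i * w⁻¹)) t = eta cs (s i * w⁻¹) t
      + eta cs w ((s i * w⁻¹) * t * (s i * w⁻¹)⁻¹) := eta_mul cs w (s i * w⁻¹) t
  have h8 : (s i * w⁻¹) * t * (s i * w⁻¹)⁻¹ = s i := by
    rw [hht, mul_inv_rev, inv_inv, cs.inv_simple]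
    rw [show s i * w⁻¹ * (w * s i * w⁻¹) * (w * s i) = s i * (w⁻¹ * w) * s i * (w⁻¹ * w) * s i
      by group, inv_mul_cancel, mul_one, mul_one]
    rw [show s i * s i * s i = (s i * s i) * s i from rfl, cs.simple_mul_simple_self, one_mul]
  have h9 : w * (s i * w⁻¹) = t := by rw [hht]; group
  rw [h9] at h7
  rw [h7, h8, h6]
  rw [show eta cs w (s i) + 1 + eta cs w (s i) = (eta cs w (s i) + eta cs w (s i)) + 1 by ring,
    hza, zero_add]

theorem isRightInversion_of_eta {w t : W} (ht : cs.IsReflection t)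
    (h : eta cs w t = 1) : ℓ (w * t) < ℓ w := by
  obtain ⟨ω, hred, rfl⟩ := cs.exists_reduced_word' w
  have hc : eta cs (π ω) t = ((ris ω).count t : ZMod 2) := eta_eq_count cs ω t
  rw [h] at hc
  have hmem : t ∈ ris ω := by
    by_contra hmem
    rw [List.count_eq_zero_of_not_mem hmem] at hc
    simp at hc
  exact (cs.isRightInversion_of_mem_rightInvSeq hred hmem).2

theorem eta_of_isRightInversion {w t : W} (ht : cs.IsReflection t)
    (h : ℓ (w * t) < ℓ w) : eta cs w t = 1 := by
  by_contra hne
  have h0 : eta cs w t = 0 := by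
    have : ∀ x : ZMod 2, x ≠ 1 → x = 0 := by decide
    exact this _ hne
  have h1 : eta cs (w * t) t = 1 := by
    rw [eta_mul, eta_reflection_self cs ht, show t * t * t⁻¹ = t by rw [ht.mul_self, one_mul,
      ht.inv], h0, add_zero]
  have h2 := isRightInversion_of_eta cs ht h1
  rw [mul_assoc, ht.mul_self, mul_one] at h2
  exact lt_asymm h h2

/-- Strong exchange property (left multiplication version). -/
theorem strong_exchange {t : W} (ht : cs.IsReflection t) (ω : List I)
    (hred : ℓ (π ω) = ω.length) (hlt : ℓ (t * π ω) < ℓ (π ω)) :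
    ∃ k, k < ω.length ∧ t * π ω = π (ω.eraseIdx k) := by
  have hrev : π (ω.reverse) = (π ω)⁻¹ := cs.wordProd_reverse ω
  have hlt' : ℓ (π ω.reverse * t) < ℓ (π ω.reverse) := by
    rw [hrev]
    have e1 : ℓ ((π ω)⁻¹ * t) = ℓ (t * π ω) := by
      rw [← cs.length_inv, mul_inv_rev, inv_inv, ht.inv]
    rw [e1, cs.length_inv]
    exact hlt
  have hredrev : cs.IsReduced ω.reverse := by
    show ℓ (π ω.reverse) = (ω.reverse).length
    rw [hrev, cs.length_inv, List.length_reverse]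
    exact hred
  have heta : eta cs (π ω.reverse) t = 1 := eta_of_isRightInversion cs ht hlt'
  have hmem : t ∈ cs.rightInvSeq ω.reverse := by
    by_contra hmem
    rw [eta_eq_count, List.count_eq_zero_of_not_mem hmem] at heta
    simp at heta
  rw [cs.rightInvSeq_reverse, List.mem_reverse] at hmem
  obtain ⟨k, hk, hkt⟩ := List.getElem_of_mem hmem
  have hklen : k < ω.length := by rwa [cs.length_leftInvSeq] at hk
  refine ⟨k, hklen, ?_⟩
  have hgd : (cs.leftInvSeq ω).getD k 1 = t := by
    rw [List.getD_eq_getElem _ 1 hk, hkt]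
  rw [← hgd]
  exact cs.getD_leftInvSeq_mul_wordProd ω k

/-- If `s_i` and a reflection `t ≠ s_i` are both "covers" of `j₀` (length drops by exactly one),
then `s_i t s_i` is a cover of `s_i j₀`. -/
theorem descent_conj_cover {t j₀ : W} (i : I) (ht : cs.IsReflection t)
    (hsj : ℓ (s i * j₀) + 1 = ℓ j₀) (htj : ℓ (t * j₀) + 1 = ℓ j₀) (hne : t ≠ s i) :
    ℓ (s i * (t * j₀)) + 2 = ℓ j₀ := by
  obtain ⟨υ, hlen, hv⟩ := cs.exists_reduced_word (s i * j₀)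
  have hπ : π (i :: υ) = j₀ := by
    rw [cs.wordProd_cons, ← hv, cs.simple_mul_simple_cancel_left]
  have hred : ℓ (π (i :: υ)) = (i :: υ).length := by
    rw [hπ, List.length_cons, ← (hlen : ℓ (π υ) = υ.length), ← hv]
    omega
  obtain ⟨k, hk, hke⟩ := strong_exchange cs ht (i :: υ) hred (by rw [hπ]; omega)
  match k with
  | 0 =>
    exfalso
    rw [hπ] at hke
    have : t * j₀ = s i * j₀ := by rw [hke, List.eraseIdx_cons_zero, ← hv]
    exact hne (mul_right_cancel this)
  | (k' + 1) =>
    rw [hπ, List.eraseIdx_cons_succ, cs.wordProd_cons] at hke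
    have hst : s i * (t * j₀) = π (υ.eraseIdx k') := by
      rw [hke, cs.simple_mul_simple_cancel_left]
    have hk' : k' < υ.length := by
      have := hk
      simp only [List.length_cons] at this
      omega
    have hj0 : ℓ j₀ = υ.length + 1 := by
      rw [← hπ, hred, List.length_cons]
    have hub : ℓ (s i * (t * j₀)) ≤ υ.length - 1 := by
      rw [hst]
      calc ℓ (π (υ.eraseIdx k')) ≤ (υ.eraseIdx k').length := cs.length_wordProd_le _
      _ ≤ υ.length - 1 := by
          rw [List.length_eraseIdx]
          split <;> omega
    rcases cs.length_simple_mul (t * j₀) i with hlb | hlb <;> omega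

theorem leR_of_length_eq {u v : W} (h : ℓ u + ℓ (u⁻¹ * v) = ℓ v) : CoxGar.leR cs u v := by
  obtain ⟨ω₁, hl1, hw1⟩ := cs.exists_reduced_word u
  obtain ⟨ω₂, hl2, hw2⟩ := cs.exists_reduced_word (u⁻¹ * v)
  refine ⟨ω₁, ω₂, ?_, ?_, hw1.symm⟩
  · show ℓ (π (ω₁ ++ ω₂)) = (ω₁ ++ ω₂).length
    rw [cs.wordProd_append, ← hw1, ← hw2, mul_inv_cancel_left, List.length_append, ← (hl1 : ℓ (π ω₁) = ω₁.length),
      ← (hl2 : ℓ (π ω₂) = ω₂.length), ← hw1, ← hw2]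
    exact h.symm
  · rw [cs.wordProd_append, ← hw1, ← hw2, mul_inv_cancel_left]

theorem length_eq_of_leR {u v : W} (h : CoxGar.leR cs u v) : ℓ u + ℓ (u⁻¹ * v) = ℓ v := by
  obtain ⟨l₁, l₂, hred, hv, hu⟩ := h
  have hle1 : ℓ (π l₁) ≤ l₁.length := cs.length_wordProd_le l₁
  have hle2 : ℓ (π l₂) ≤ l₂.length := cs.length_wordProd_le l₂
  have happ : ℓ (π (l₁ ++ l₂)) ≤ ℓ (π l₁) + ℓ (π l₂) := by
    rw [cs.wordProd_append]; exact cs.length_mul_le _ _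
  have hlen : ℓ (π (l₁ ++ l₂)) = l₁.length + l₂.length := by
    rw [hred]; exact List.length_append
  have hz : u⁻¹ * v = π l₂ := by
    rw [← hv, ← hu, cs.wordProd_append, inv_mul_cancel_left]
  have h1 : ℓ u = l₁.length := by rw [← hu]; omega
  have h2 : ℓ (u⁻¹ * v) = l₂.length := by rw [hz]; omega
  rw [h1, h2, ← hv, hlen]

theorem length_le_of_leR {u v : W} (h : CoxGar.leR cs u v) : ℓ u ≤ ℓ v := by
  have := length_eq_of_leR cs h
  omega

theorem key_lemma (l₂ : List I) (l₁ : List I) :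
    ∀ t : W, cs.IsReflection t → CoxGar.IsRed cs (l₁ ++ l₂) →
      ℓ (t * π (l₁ ++ l₂)) + 1 = ℓ (π (l₁ ++ l₂)) →
      ℓ (π l₁) < ℓ (t * π l₁) →
      CoxGar.leR cs (π l₁) (t * π (l₁ ++ l₂)) := by
  induction l₁ with
  | nil =>
    intro t ht hred hbase hasc
    apply leR_of_length_eq
    simp
  | cons i l₁' ih =>
    intro t ht hred hbase hasc
    have hja : π ((i :: l₁') ++ l₂) = s i * π (l₁' ++ l₂) := by
      rw [List.cons_append, cs.wordProd_cons]
    have hxa : π (i :: l₁') = s i * π l₁' := cs.wordProd_cons i l₁'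
    have hredlen : ℓ (π ((i :: l₁') ++ l₂)) = l₁'.length + l₂.length + 1 := by
      rw [hred]
      simp only [List.cons_append, List.length_cons, List.length_append]
      try omega
    have hj'le : ℓ (π (l₁' ++ l₂)) ≤ l₁'.length + l₂.length := by
      have := cs.length_wordProd_le (l₁' ++ l₂)
      simpa using this
    have hj'ge : ℓ (π ((i :: l₁') ++ l₂)) ≤ ℓ (π (l₁' ++ l₂)) + 1 := by
      rw [hja]
      rcases cs.length_simple_mul (π (l₁' ++ l₂)) i with hh | hh <;> omega
    have hj'red : CoxGar.IsRed cs (l₁' ++ l₂) := by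
      show ℓ (π (l₁' ++ l₂)) = (l₁' ++ l₂).length
      simp only [List.length_append]
      omega
    have hj'len : ℓ (π (l₁' ++ l₂)) = l₁'.length + l₂.length := hj'red.trans (by simp)
    -- x is reduced, x̃ is reduced
    have hxle : ℓ (π (i :: l₁')) ≤ l₁'.length + 1 := by
      have := cs.length_wordProd_le (i :: l₁')
      simpa using this
    have hx'le : ℓ (π l₁') ≤ l₁'.length := cs.length_wordProd_le l₁'
    have hsplit : ℓ (π ((i :: l₁') ++ l₂)) ≤ ℓ (π (i :: l₁')) + ℓ (π l₂) := by
      rw [show (i :: l₁') ++ l₂ = (i :: l₁') ++ l₂ from rfl, cs.wordProd_append]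
      exact cs.length_mul_le _ _
    have hl₂le : ℓ (π l₂) ≤ l₂.length := cs.length_wordProd_le l₂
    have hxlen : ℓ (π (i :: l₁')) = l₁'.length + 1 := by omega
    have hxsplit : ℓ (π (i :: l₁')) ≤ ℓ (π l₁') + 1 := by
      rw [hxa]
      rcases cs.length_simple_mul (π l₁') i with hh | hh <;> omega
    have hx'len : ℓ (π l₁') = l₁'.length := by omega
    by_cases hts : t = s i
    · exfalso
      have : t * π (i :: l₁') = π l₁' := by
        rw [hts, hxa, cs.simple_mul_simple_cancel_left]
      rw [this] at hasc
      omega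
    · set t' := s i * t * s i with ht'def
      have ht' : cs.IsReflection t' := by
        have := ht.conj (s i)
        rwa [cs.inv_simple] at this
      have hcanc : s i * π ((i :: l₁') ++ l₂) = π (l₁' ++ l₂) := by
        rw [hja, cs.simple_mul_simple_cancel_left]
      have hsij : ℓ (s i * π ((i :: l₁') ++ l₂)) + 1 = ℓ (π ((i :: l₁') ++ l₂)) := by
        rw [hcanc]
        omega
      have hcov := descent_conj_cover cs i ht hsij hbase hts
      have ht'j : t' * π (l₁' ++ l₂) = s i * (t * π ((i :: l₁') ++ l₂)) := by
        rw [ht'def, hja]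
        group
      have hbase' : ℓ (t' * π (l₁' ++ l₂)) + 1 = ℓ (π (l₁' ++ l₂)) := by
        rw [ht'j]
        omega
      have ht'x : t' * π l₁' = s i * (t * π (i :: l₁')) := by
        rw [ht'def, hxa]
        group
      have hasc' : ℓ (π l₁') < ℓ (t' * π l₁') := by
        rw [ht'x]
        rcases cs.length_simple_mul (t * π (i :: l₁')) i with hh | hh <;> omega
      have hIH := ih t' ht' hj'red hbase' hasc'
      have hIHlen := length_eq_of_leR cs hIH
      apply leR_of_length_eq
      have helem : (π (i :: l₁'))⁻¹ * (t * π ((i :: l₁') ++ l₂))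
          = (π l₁')⁻¹ * (t' * π (l₁' ++ l₂)) := by
        rw [ht'j, hxa, hja, mul_inv_rev, cs.inv_simple]
        group
      rw [helem]
      have h1 : ℓ (t * π ((i :: l₁') ++ l₂)) + 1 = ℓ (π ((i :: l₁') ++ l₂)) := hbase
      omega

theorem length_dichotomy {x j t : W} (ht : cs.IsReflection t)
    (hle : CoxGar.leR cs x j) (hbase : ℓ (t * j) + 1 = ℓ j) :
    ℓ (t * x) + 1 = ℓ x ∨ ℓ x < ℓ (t * x) := by
  have h1 := length_eq_of_leR cs hle
  have h2 : ℓ (t * j) ≤ ℓ (t * x) + ℓ (x⁻¹ * j) := by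
    have : t * x * (x⁻¹ * j) = t * j := by group
    rw [← this]
    exact cs.length_mul_le _ _
  have h3 : ℓ (t * x) ≠ ℓ x := ht.length_mul_right_ne x
  omega

theorem rfl'_isReflection {V : Type*} [AddCommGroup V] [Module ℝ V]
    (gr : GeomRep cs V) {b : V} (hb : b ∈ gr.posRoots) :
    cs.IsReflection (gr.rfl' b) := by
  obtain ⟨⟨w, i, hwi⟩, -⟩ := hb
  have hcand : ∀ v : V, gr.ρ (w * cs.simple i * w⁻¹) v = v - (2 * gr.B b v) • b := by
    intro v
    have h1 : gr.ρ (w * cs.simple i * w⁻¹) v = gr.ρ w (gr.ρ (cs.simple i) (gr.ρ w⁻¹ v)) := by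
      rw [map_mul, map_mul]
      rfl
    have h2 : gr.ρ w (gr.ρ w⁻¹ v) = v := by
      rw [← Module.End.mul_apply, ← map_mul, mul_inv_cancel, map_one, Module.End.one_apply]
    have h3 : gr.B (gr.α i) (gr.ρ w⁻¹ v) = gr.B b v := by
      have h4 : gr.ρ w⁻¹ b = gr.α i := by
        rw [hwi, ← Module.End.mul_apply, ← map_mul, inv_mul_cancel, map_one, Module.End.one_apply]
      calc gr.B (gr.α i) (gr.ρ w⁻¹ v) = gr.B (gr.ρ w⁻¹ b) (gr.ρ w⁻¹ v) := by rw [h4]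
      _ = gr.B b v := gr.ρ_isom w⁻¹ b v
    rw [h1, gr.ρ_simple, map_sub, map_smul, h2, h3, ← hwi]
  have hex : ∃ t : W, ∀ v : V, gr.ρ t v = v - (2 * gr.B b v) • b := ⟨_, hcand⟩
  have hspec : ∀ v : V, gr.ρ (gr.rfl' b) v = v - (2 * gr.B b v) • b :=
    Classical.epsilon_spec hex
  have heq : gr.rfl' b = w * cs.simple i * w⁻¹ := by
    apply gr.faithful
    apply LinearMap.ext
    intro v
    rw [hspec v, hcand v]
  rw [heq]
  have := (cs.isReflection_simple i).conj w
  exact this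

end AuxCoxGar

/-- If `j = x ∨ y` exists and `ℓ(s_β j) = ℓ(j) - 1` for a positive root `β`, then
`ℓ(s_β x) = ℓ(x) - 1` or `ℓ(s_β y) = ℓ(y) - 1`. -/
theorem base_of_join (gr : GeomRep cs V) (x y j : W) (hj : IsJoin cs {x, y} j)
    (b : V) (hb : b ∈ gr.posRoots)
    (h : cs.length (gr.rfl' b * j) + 1 = cs.length j) :
    cs.length (gr.rfl' b * x) + 1 = cs.length x ∨
      cs.length (gr.rfl' b * y) + 1 = cs.length y := by
  classical
  have ht : cs.IsReflection (gr.rfl' b) := rfl'_isReflection cs gr hb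
  set t := gr.rfl' b with htdef
  by_contra hcon
  push_neg at hcon
  obtain ⟨hx, hy⟩ := hcon
  have hxj : leR cs x j := hj.1 x (Set.mem_insert x {y})
  have hyj : leR cs y j := hj.1 y (Set.mem_insert_of_mem x rfl)
  have hxasc : cs.length x < cs.length (t * x) := by
    rcases length_dichotomy cs ht hxj h with h' | h'
    · exact absurd h' hx
    · exact h'
  have hyasc : cs.length y < cs.length (t * y) := by
    rcases length_dichotomy cs ht hyj h with h' | h'
    · exact absurd h' hy
    · exact h'
  have hkx : leR cs x (t * j) := by
    obtain ⟨l₁, l₂, hred, hprod, hxprod⟩ := hxj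
    have hk := key_lemma cs l₂ l₁ t ht hred
      (by rw [hprod]; exact h) (by rw [hxprod]; exact hxasc)
    rwa [hprod, hxprod] at hk
  have hky : leR cs y (t * j) := by
    obtain ⟨l₁, l₂, hred, hprod, hyprod⟩ := hyj
    have hk := key_lemma cs l₂ l₁ t ht hred
      (by rw [hprod]; exact h) (by rw [hyprod]; exact hyasc)
    rwa [hprod, hyprod] at hk
  have hjle : leR cs j (t * j) := by
    apply hj.2 (t * j)
    intro z hz
    rcases hz with rfl | hz
    · exact hkx
    · rw [Set.mem_singleton_iff] at hz
      subst hz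
      exact hky
  have hfin := length_le_of_leR cs hjle
  omega


end CoxGar
end
end
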